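/- arXiv:2207.10251 — 8 statements merged into one kernel-verified Lean document; each statement's English description precedes it below -/
import Mathlib

section
/- Let k, n be positive integers, let a be the largest divisor of n that is coprime to k, and let b = n/a. Then a positive integer j is a multiple of gcd(jk, n) if and only if j is a multiple of b. -/
/-- Let a be the largest divisor of n coprime to k and b = n/a. Then a positive
integer j is a multiple of gcd(jk, n) iff j is a multiple of b. -/
theorem multiple_of_gcd_iff (k n a b : ℕ) (hk : 0 < k) (hn : 0 < n)
    (han : a ∣ n) (hak : Nat.Coprime a k)
    (hmax : ∀ d : ℕ, d ∣ n → Nat.Coprime d k → d ≤ a)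
    (hb : b = n / a) :
    ∀ j : ℕ, 0 < j → (Nat.gcd (j * k) n ∣ j ↔ b ∣ j) := by
  subst hb
  intro j hj
  have ha : 0 < a := Nat.pos_of_dvd_of_pos han hn
  have hbn : n / a ∣ n := Nat.div_dvd_of_dvd han
  have hbpos : 0 < n / a := Nat.div_pos (Nat.le_of_dvd hn han) ha
  have hprime : ∀ p : ℕ, p.Prime → p ∣ n / a → p ∣ k := by
    intro p hp hpb
    by_contra hpk
    have hap : a * p ∣ n := by
      obtain ⟨c, hc⟩ := hpb
      exact ⟨c, by rw [← Nat.mul_div_cancel' han, hc]; ring⟩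
    have hcop : Nat.Coprime (a * p) k :=
      Nat.Coprime.mul hak ((Nat.Prime.coprime_iff_not_dvd hp).mpr hpk)
    have := hmax (a * p) hap hcop
    nlinarith [hp.two_le]
  have hna : n.factorization = a.factorization + (n / a).factorization := by
    rw [← Nat.factorization_mul ha.ne' hbpos.ne', Nat.mul_div_cancel' han]
  constructor
  · intro h
    have hfle := (Nat.factorization_le_iff_dvd (Nat.gcd_pos_of_pos_right _ hn).ne'
      hj.ne').mpr h
    rw [← Nat.factorization_le_iff_dvd hbpos.ne' hj.ne']
    intro p
    by_cases hp : p.Prime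
    · by_cases hpk : p ∣ k
      · have h1 := hfle p
        rw [Nat.factorization_gcd (by positivity) hn.ne'] at h1
        simp only [Finsupp.inf_apply, Nat.factorization_mul hj.ne' hk.ne',
          Finsupp.add_apply] at h1
        simp only [inf_le_iff, min_le_iff] at h1
        have hk1 : 0 < k.factorization p := hp.factorization_pos_of_dvd hk.ne' hpk
        have h2 : (n / a).factorization p ≤ n.factorization p :=
          (Nat.factorization_le_iff_dvd hbpos.ne' hn.ne').mpr hbn p
        rcases h1 with h1 | h1
        · exact absurd h1 (Nat.not_le.mpr (Nat.lt_add_of_pos_right hk1))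
        · exact le_trans h2 h1
      · have : ¬ p ∣ n / a := fun hd => hpk (hprime p hp hd)
        simp [Nat.factorization_eq_zero_of_not_dvd this]
    · simp [Nat.factorization_eq_zero_of_not_prime _ hp]
  · intro h
    rw [← Nat.factorization_le_iff_dvd (Nat.gcd_pos_of_pos_right _ hn).ne' hj.ne']
    intro p
    rw [Nat.factorization_gcd (by positivity) hn.ne']
    simp only [Finsupp.inf_apply, Nat.factorization_mul hj.ne' hk.ne',
      Finsupp.add_apply]
    by_cases hpk : p ∣ k
    · have hpa : a.factorization p = 0 := by
        by_cases hp : p.Prime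
        · refine Nat.factorization_eq_zero_of_not_dvd fun hpa => ?_
          have h1 : p ∣ Nat.gcd a k := Nat.dvd_gcd hpa hpk
          rw [hak] at h1
          exact hp.ne_one (Nat.dvd_one.mp h1)
        · exact Nat.factorization_eq_zero_of_not_prime _ hp
      have h2 : (n / a).factorization p ≤ j.factorization p :=
        (Nat.factorization_le_iff_dvd hbpos.ne' hj.ne').mpr h p
      have h3 : n.factorization p = a.factorization p + (n / a).factorization p := by
        rw [hna]; simp
      calc (j.factorization p + k.factorization p) ⊓ n.factorization p
          ≤ n.factorization p := inf_le_right
        _ = (n / a).factorization p := by rw [h3, hpa, Nat.zero_add]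
        _ ≤ j.factorization p := h2
    · have hk0 : k.factorization p = 0 := Nat.factorization_eq_zero_of_not_dvd hpk
      calc (j.factorization p + k.factorization p) ⊓ n.factorization p
          ≤ j.factorization p + k.factorization p := inf_le_left
        _ = j.factorization p := by rw [hk0, Nat.add_zero]
end

section
/- Let ψ : (ZMod k)^n → (ZMod k)^n be defined by ψ(v) = (v₂, ..., vₙ, v₁+1), with k, n ≥ 1. The number of orbits of the cyclic group generated by ψ acting on (ZMod k)^n equals (1/(kn)) · Σ_{d ∣ a} φ(d) · k^{n/d}, where φ is Euler's totient function and a is the largest divisor of n coprime to k. -/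
/-- ψ(v) = (v₂, ..., vₙ, v₁+1) on (ZMod k)^n. -/
def psi (k n : ℕ) : (Fin n → ZMod k) → (Fin n → ZMod k) :=
  fun v j =>
    v ⟨((j : ℕ) + 1) % n, Nat.mod_lt _ j.pos⟩ + if (j : ℕ) + 1 = n then 1 else 0

namespace PsiAux

variable {k n : ℕ}

lemma dvd_succ_iff {n : ℕ} (a : ℕ) (hn : 0 < n) : n ∣ a + 1 ↔ a % n + 1 = n := by
  have h4 := Nat.mod_add_div a n
  have h3 : a % n < n := Nat.mod_lt _ hn
  constructor
  · intro h
    have h5 : n ∣ a % n + 1 := by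
      have h6 : a % n + 1 = (a + 1) - n * (a / n) := by omega
      rw [h6]
      exact Nat.dvd_sub h ⟨a / n, rfl⟩
    have h7 := Nat.le_of_dvd (Nat.succ_pos _) h5
    omega
  · intro h
    have h8 : n * (a / n + 1) = n * (a / n) + n := Nat.mul_succ n (a / n)
    exact ⟨a / n + 1, by omega⟩

lemma psi_iterate (hn : 0 < n) (i : ℕ) (v : Fin n → ZMod k) (j : Fin n) :
    (psi k n)^[i] v j
      = v ⟨((j : ℕ) + i) % n, Nat.mod_lt _ hn⟩ + ((((j : ℕ) + i) / n : ℕ) : ZMod k) := by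
  induction i generalizing v with
  | zero =>
    simp [Nat.mod_eq_of_lt j.2, Nat.div_eq_of_lt j.2]
  | succ i ih =>
    rw [Function.iterate_succ_apply, ih (psi k n v)]
    simp only [psi]
    have h1 : (((j : ℕ) + i) % n + 1) % n = ((j : ℕ) + i + 1) % n := Nat.mod_add_mod _ _ _
    have h2 : ((j : ℕ) + i + 1) / n = ((j : ℕ) + i) / n + if n ∣ (j : ℕ) + i + 1 then 1 else 0 :=
      Nat.succ_div
    have h3 : (n ∣ (j : ℕ) + i + 1) ↔ (((j : ℕ) + i) % n + 1 = n) := dvd_succ_iff _ hn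
    have h4 : ((j : ℕ) + (i + 1)) = ((j : ℕ) + i) + 1 := by ring
    simp only [h4, h1, h2, ← h3, apply_ite (Nat.cast : ℕ → ZMod k), Nat.cast_add,
      Nat.cast_one, Nat.cast_zero]
    ring

end PsiAux

namespace PsiAux2
open PsiAux
variable {k n : ℕ}

lemma psi_fixed_iff (hn : 0 < n) (m : ℕ) (v : Fin n → ZMod k) :
    (psi k n)^[m] v = v ↔
      ∀ (j : ℕ) (hj : j < n),
        v ⟨(j + m) % n, Nat.mod_lt _ hn⟩ + (((j + m) / n : ℕ) : ZMod k) = v ⟨j, hj⟩ := by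
  rw [funext_iff]
  constructor
  · intro h j hj
    have := h ⟨j, hj⟩
    rwa [psi_iterate hn] at this
  · intro h j
    rw [psi_iterate hn]
    exact h j j.2

lemma prop_lemma (hn : 0 < n) {m : ℕ} {v : Fin n → ZMod k}
    (hv : ∀ (j : ℕ) (hj : j < n),
      v ⟨(j + m) % n, Nat.mod_lt _ hn⟩ + (((j + m) / n : ℕ) : ZMod k) = v ⟨j, hj⟩)
    (t j : ℕ) (hj : j < n) :
    v ⟨(j + t * m) % n, Nat.mod_lt _ hn⟩
      = v ⟨j, hj⟩ - (((j + t * m) / n : ℕ) : ZMod k) := by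
  induction t with
  | zero => simp [Nat.mod_eq_of_lt hj, Nat.div_eq_of_lt hj]
  | succ t ih =>
    have hAm : j + (t + 1) * m = (j + t * m) + m := by ring
    have e1 : ((j + t * m) % n + m) % n = ((j + t * m) + m) % n := Nat.mod_add_mod _ _ _
    have e2 : ((j + t * m) + m) / n = (j + t * m) / n + ((j + t * m) % n + m) / n := by
      conv_lhs => rw [← Nat.div_add_mod (j + t * m) n]
      rw [Nat.add_assoc, Nat.mul_add_div hn]
    have key := hv ((j + t * m) % n) (Nat.mod_lt _ hn)
    simp only [hAm, ← e1, e2]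
    push_cast
    linear_combination key + ih

lemma psi_iterate_kn (hk : 0 < k) (hn : 0 < n) (v : Fin n → ZMod k) :
    (psi k n)^[k * n] v = v := by
  funext j
  rw [psi_iterate hn]
  have h1 : ((j : ℕ) + k * n) % n = (j : ℕ) := by
    rw [Nat.add_mul_mod_self_right, Nat.mod_eq_of_lt j.2]
  have h2 : ((j : ℕ) + k * n) / n = k := by
    rw [Nat.add_mul_div_right _ _ hn, Nat.div_eq_of_lt j.2, Nat.zero_add]
  simp only [h1, h2, ZMod.natCast_self, add_zero, Fin.eta]

lemma psi_iterate_mul_kn (hk : 0 < k) (hn : 0 < n) (q : ℕ) (v : Fin n → ZMod k) :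
    (psi k n)^[k * n * q] v = v := by
  induction q with
  | zero => simp
  | succ q ih =>
    rw [Nat.mul_succ, Function.iterate_add_apply, psi_iterate_kn hk hn, ih]

lemma psi_iterate_mod (hk : 0 < k) (hn : 0 < n) (i : ℕ) (v : Fin n → ZMod k) :
    (psi k n)^[i] v = (psi k n)^[i % (k * n)] v := by
  conv_lhs => rw [← Nat.mod_add_div i (k * n)]
  rw [Function.iterate_add_apply, psi_iterate_mul_kn hk hn]

end PsiAux2

namespace PsiAux3
variable {k n : ℕ}

lemma exists_t (hn : 0 < n) (m j : ℕ) :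
    ∃ t : ℕ, (j % Nat.gcd m n + t * m) % n = j % n := by
  have hgpos : 0 < Nat.gcd m n := Nat.gcd_pos_of_pos_right m hn
  set g := Nat.gcd m n with hg
  set m' := m / g with hm'
  set n' := n / g with hn'
  have hm : g * m' = m := Nat.mul_div_cancel' (Nat.gcd_dvd_left m n)
  have hnn : g * n' = n := Nat.mul_div_cancel' (Nat.gcd_dvd_right m n)
  have hn'pos : 0 < n' := by
    rcases Nat.eq_zero_or_pos n' with h | h
    · rw [h, Nat.mul_zero] at hnn; omega
    · exact h
  have cop : Nat.Coprime m' n' := Nat.coprime_div_gcd_div_gcd hgpos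
  haveI : NeZero n' := ⟨hn'pos.ne'⟩
  set u : (ZMod n')ˣ := ZMod.unitOfCoprime m' cop with hu
  set t : ℕ := (((u⁻¹ : (ZMod n')ˣ) : ZMod n') * ((j / g : ℕ) : ZMod n')).val with ht
  refine ⟨t, ?_⟩
  have h1 : ((t * m' : ℕ) : ZMod n') = ((j / g : ℕ) : ZMod n') := by
    push_cast
    rw [ht, ZMod.natCast_val, ZMod.cast_id]
    have hum : ((m' : ℕ) : ZMod n') = (u : ZMod n') := (ZMod.coe_unitOfCoprime m' cop).symm
    rw [hum]
    have h2 : ((u⁻¹ : (ZMod n')ˣ) : ZMod n') * (u : ZMod n') = 1 := u.inv_mul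
    linear_combination ((j / g : ℕ) : ZMod n') * h2
  have h2 : t * m' ≡ j / g [MOD n'] := (ZMod.natCast_eq_natCast_iff _ _ _).mp h1
  have h3 : g * (t * m') ≡ g * (j / g) [MOD g * n'] := h2.mul_left' g
  rw [hnn] at h3
  have h4 : j % g + g * (t * m') ≡ j % g + g * (j / g) [MOD n] := h3.add_left (j % g)
  have h5 : j % g + g * (j / g) = j := Nat.mod_add_div j g
  have h6 : g * (t * m') = t * m := by rw [← hm]; ring
  rw [h5, h6] at h4
  exact h4

lemma floor_consistent_aux (hk : 0 < k) (hn : 0 < n) {m : ℕ} (hkm : k ∣ m / Nat.gcd m n)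
    {j0 : ℕ} (t1 t2 : ℕ) (hle : t1 ≤ t2)
    (hmod : (j0 + t1 * m) % n = (j0 + t2 * m) % n) :
    (((j0 + t1 * m) / n : ℕ) : ZMod k) = (((j0 + t2 * m) / n : ℕ) : ZMod k) := by
  have hgpos : 0 < Nat.gcd m n := Nat.gcd_pos_of_pos_right m hn
  set g := Nat.gcd m n with hg
  set m' := m / g with hm'
  set n' := n / g with hn'
  have hm : g * m' = m := Nat.mul_div_cancel' (Nat.gcd_dvd_left m n)
  have hnn : g * n' = n := Nat.mul_div_cancel' (Nat.gcd_dvd_right m n)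
  have cop : Nat.Coprime m' n' := Nat.coprime_div_gcd_div_gcd hgpos
  have hdvd : n ∣ (t2 - t1) * m := by
    have h1 : j0 + t1 * m ≤ j0 + t2 * m :=
      Nat.add_le_add_left (Nat.mul_le_mul_right m hle) j0
    have h2 : n ∣ (j0 + t2 * m) - (j0 + t1 * m) := (Nat.modEq_iff_dvd' h1).mp hmod
    have h3 : (j0 + t2 * m) - (j0 + t1 * m) = (t2 - t1) * m := by
      rw [Nat.sub_mul]
      omega
    rwa [h3] at h2
  have hdvd' : n' ∣ t2 - t1 := by
    have h1 : g * n' ∣ g * ((t2 - t1) * m') := by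
      rw [hnn]
      convert hdvd using 1
      rw [← hm]; ring
    have h2 : n' ∣ (t2 - t1) * m' := (Nat.mul_dvd_mul_iff_left hgpos).mp h1
    exact (Nat.Coprime.dvd_of_dvd_mul_right cop.symm h2)
  obtain ⟨s, hs⟩ := hdvd'
  have ht2 : t2 = t1 + n' * s := by omega
  have hkey : j0 + t2 * m = (j0 + t1 * m) + (s * m') * n := by
    rw [ht2, ← hm, ← hnn]; ring
  rw [hkey, Nat.add_mul_div_right _ _ hn]
  obtain ⟨c, hc⟩ := hkm
  push_cast [hc, ZMod.natCast_self]
  ring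

lemma floor_consistent (hk : 0 < k) (hn : 0 < n) {m : ℕ} (hkm : k ∣ m / Nat.gcd m n)
    {j0 : ℕ} (t1 t2 : ℕ)
    (hmod : (j0 + t1 * m) % n = (j0 + t2 * m) % n) :
    (((j0 + t1 * m) / n : ℕ) : ZMod k) = (((j0 + t2 * m) / n : ℕ) : ZMod k) := by
  rcases le_total t1 t2 with h | h
  · exact floor_consistent_aux hk hn hkm t1 t2 h hmod
  · exact (floor_consistent_aux hk hn hkm t2 t1 h hmod.symm).symm

end PsiAux3

namespace PsiAux4
open PsiAux PsiAux2 PsiAux3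
variable {k n : ℕ}

lemma card_fixed (hk : 0 < k) (hn : 0 < n) (m : ℕ) :
    Nat.card {v : Fin n → ZMod k // (psi k n)^[m] v = v} =
      if k ∣ m / Nat.gcd m n then k ^ (Nat.gcd m n) else 0 := by
  haveI : NeZero k := ⟨hk.ne'⟩
  have hgpos : 0 < Nat.gcd m n := Nat.gcd_pos_of_pos_right m hn
  set g := Nat.gcd m n with hg
  set m' := m / g with hm'
  set n' := n / g with hn'
  have hm : g * m' = m := Nat.mul_div_cancel' (Nat.gcd_dvd_left m n)
  have hnn : g * n' = n := Nat.mul_div_cancel' (Nat.gcd_dvd_right m n)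
  have hgle : g ≤ n := Nat.le_of_dvd hn (Nat.gcd_dvd_right m n)
  by_cases hkm : k ∣ m'
  · rw [if_pos hkm]
    choose T hT using fun j => exists_t hn m j
    set ρ : {v : Fin n → ZMod k // (psi k n)^[m] v = v} → (Fin g → ZMod k) :=
      fun p j => p.1 ⟨(j : ℕ), lt_of_lt_of_le j.2 hgle⟩ with hρ
    have hbij : Function.Bijective ρ := by
      constructor
      · rintro ⟨v, hv⟩ ⟨v', hv'⟩ h
        have Hv := prop_lemma hn ((psi_fixed_iff hn m v).mp hv)
        have Hv' := prop_lemma hn ((psi_fixed_iff hn m v').mp hv')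
        ext j
        have hj0 : (j : ℕ) % g < n := lt_of_lt_of_le (Nat.mod_lt _ hgpos) hgle
        have ht : ((j : ℕ) % g + T (j : ℕ) * m) % n = (j : ℕ) := by
          rw [hT (j : ℕ), Nat.mod_eq_of_lt j.2]
        have e : (⟨((j : ℕ) % g + T (j : ℕ) * m) % n, Nat.mod_lt _ hn⟩ : Fin n) = j :=
          Fin.ext ht
        have h1 := Hv (T (j : ℕ)) ((j : ℕ) % g) hj0
        have h2 := Hv' (T (j : ℕ)) ((j : ℕ) % g) hj0
        rw [e] at h1 h2
        have h3 : v ⟨(j : ℕ) % g, hj0⟩ = v' ⟨(j : ℕ) % g, hj0⟩ := by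
          have h4 := congrFun h ⟨(j : ℕ) % g, Nat.mod_lt _ hgpos⟩
          exact h4
        show v j = v' j
        rw [show v j = v (Fin.mk (j : ℕ) j.2) from rfl,
          show v' j = v' (Fin.mk (j : ℕ) j.2) from rfl] at *
        rw [h1, h2, h3]
      · intro w
        set v : Fin n → ZMod k := fun j =>
          w ⟨(j : ℕ) % g, Nat.mod_lt _ hgpos⟩
            - ((((j : ℕ) % g + T (j : ℕ) * m) / n : ℕ) : ZMod k) with hvdef
        have hvfix : (psi k n)^[m] v = v := by
          rw [psi_fixed_iff hn]
          intro j hj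
          have hmod1 : ((j + m) % n) % g = j % g := by
            rw [Nat.mod_mod_of_dvd _ (Nat.gcd_dvd_right m n), ← hg]
            conv_lhs => rw [← hm]
            rw [Nat.add_mul_mod_self_left]
          have hT1 : (j % g + T j * m) % n = j := by rw [hT j, Nat.mod_eq_of_lt hj]
          have hT2 : (j % g + T ((j + m) % n) * m) % n = (j + m) % n := by
            have h5 := hT ((j + m) % n)
            rwa [hmod1, Nat.mod_mod_of_dvd _ (dvd_refl n)] at h5
          have hmod' : (j % g + T ((j + m) % n) * m) % n
              = (j % g + (T j + 1) * m) % n := by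
            have h6 : j % g + (T j + 1) * m = (j % g + T j * m) + m := by ring
            rw [hT2, h6]
            conv_rhs => rw [← Nat.mod_add_mod, hT1]
          have hcast := floor_consistent hk hn hkm (T ((j + m) % n)) (T j + 1) hmod'
          have hE : (j % g + (T j + 1) * m) / n = (j % g + T j * m) / n + (j + m) / n := by
            have h5 : j % g + (T j + 1) * m = (j % g + T j * m) + m := by ring
            rw [h5]
            conv_lhs => rw [← Nat.div_add_mod (j % g + T j * m) n]
            rw [Nat.add_assoc, Nat.mul_add_div hn, hT1]
          have hcast2 : ((((j + m) % n % g + T ((j + m) % n) * m) / n : ℕ) : ZMod k)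
              = (((j % g + T j * m) / n : ℕ) : ZMod k) + (((j + m) / n : ℕ) : ZMod k) := by
            rw [hmod1, hcast, hE]; push_cast; ring
          have hwcongr : ∀ (x y : ℕ) (hx : x < g) (hy : y < g), x = y →
              w ⟨x, hx⟩ = w ⟨y, hy⟩ := by
            rintro x y hx hy rfl; rfl
          show v ⟨(j + m) % n, Nat.mod_lt _ hn⟩ + (((j + m) / n : ℕ) : ZMod k) = v ⟨j, hj⟩
          rw [hvdef]
          simp only
          linear_combination
            (hwcongr ((j + m) % n % g) (j % g) (Nat.mod_lt _ hgpos) (Nat.mod_lt _ hgpos) hmod1)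
            - hcast2
        refine ⟨⟨v, hvfix⟩, ?_⟩
        funext j
        show v ⟨(j : ℕ), lt_of_lt_of_le j.2 hgle⟩ = w j
        have hjg : (j : ℕ) % g = (j : ℕ) := Nat.mod_eq_of_lt j.2
        have hjn : (j : ℕ) < n := lt_of_lt_of_le j.2 hgle
        have hmod' : ((j : ℕ) + T (j : ℕ) * m) % n = ((j : ℕ) + 0 * m) % n := by
          rw [Nat.zero_mul, Nat.add_zero, Nat.mod_eq_of_lt hjn]
          have h5 := hT (j : ℕ)
          rwa [hjg, Nat.mod_eq_of_lt hjn] at h5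
        have hc := floor_consistent hk hn hkm (T (j : ℕ)) 0 hmod'
        rw [Nat.zero_mul, Nat.add_zero, Nat.div_eq_of_lt hjn] at hc
        rw [hvdef]
        simp only
        have hw2 : w ⟨(j : ℕ) % g, Nat.mod_lt _ hgpos⟩ = w j := by
          exact congrArg w (Fin.ext hjg)
        have hc2 : ((((j : ℕ) % g + T (j : ℕ) * m) / n : ℕ) : ZMod k) = 0 := by
          rw [hjg]
          rw [Nat.cast_zero] at hc
          exact hc
        linear_combination hw2 - hc2
    rw [Nat.card_congr (Equiv.ofBijective ρ hbij), Nat.card_eq_fintype_card,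
      Fintype.card_fun, ZMod.card, Fintype.card_fin]
  · rw [if_neg hkm, Nat.card_eq_zero]
    left
    constructor
    rintro ⟨v, hv⟩
    have Hv := prop_lemma hn ((psi_fixed_iff hn m v).mp hv) n' 0 hn
    have hnm : 0 + n' * m = n * m' := by rw [← hm, ← hnn]; ring
    have h1 : (0 + n' * m) % n = 0 := by rw [hnm]; exact Nat.mul_mod_right n m'
    have h2 : (0 + n' * m) / n = m' := by
      rw [hnm]; exact Nat.mul_div_cancel_left m' hn
    simp only [h1, h2] at Hv
    have hm0 : (m' : ZMod k) = 0 := by linear_combination Hv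
    exact hkm ((ZMod.natCast_eq_zero_iff m' k).mp hm0)

end PsiAux4

def psiAddAction (k n : ℕ) (hk : 0 < k) (hn : 0 < n) :
    AddAction (ZMod (k * n)) (Fin n → ZMod k) :=
  haveI : NeZero (k * n) := ⟨(Nat.mul_pos hk hn).ne'⟩
  { vadd := fun gz v => (psi k n)^[gz.val] v
    zero_vadd := fun v => by
      show (psi k n)^[(0 : ZMod (k * n)).val] v = v
      rw [ZMod.val_zero]
      rfl
    add_vadd := fun g h v => by
      show (psi k n)^[(g + h).val] v
        = (psi k n)^[g.val] ((psi k n)^[h.val] v)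
      rw [← Function.iterate_add_apply, ZMod.val_add,
        ← PsiAux2.psi_iterate_mod hk hn] }

namespace PsiAux5
variable {k n : ℕ}

lemma keysum (hk : 0 < k) (hn : 0 < n) (a : ℕ) (han : a ∣ n) (hak : Nat.Coprime a k)
    (hmax : ∀ d : ℕ, d ∣ n → Nat.Coprime d k → d ≤ a) :
    ∑ m ∈ Finset.range (k * n), (if k ∣ m / Nat.gcd m n then k ^ Nat.gcd m n else 0)
      = ∑ d ∈ a.divisors, d.totient * k ^ (n / d) := by
  have hapos : 0 < a := Nat.pos_of_dvd_of_pos han hn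
  have hdiv : a.divisors = n.divisors.filter (fun d => Nat.Coprime d k) := by
    ext d
    simp only [Nat.mem_divisors, Finset.mem_filter]
    constructor
    · rintro ⟨hda, -⟩
      exact ⟨⟨hda.trans han, hn.ne'⟩, Nat.Coprime.coprime_dvd_left hda hak⟩
    · rintro ⟨⟨hdn, -⟩, hdk⟩
      refine ⟨?_, hapos.ne'⟩
      have h1 : Nat.lcm d a ∣ n := Nat.lcm_dvd hdn han
      have h2 : Nat.Coprime (Nat.lcm d a) k :=
        Nat.Coprime.coprime_dvd_left (Nat.lcm_dvd_mul d a) (Nat.Coprime.mul hdk hak)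
      have h5 : Nat.lcm d a = a :=
        Nat.le_antisymm (hmax _ h1 h2)
          (Nat.le_of_dvd (Nat.pos_of_dvd_of_pos h1 hn) (Nat.dvd_lcm_right d a))
      exact h5 ▸ Nat.dvd_lcm_left d a
  have main : ∀ d ∈ n.divisors,
      (∑ m ∈ (Finset.range (k * n)).filter (fun m => n / Nat.gcd m n = d),
        (if k ∣ m / Nat.gcd m n then k ^ Nat.gcd m n else 0))
      = (if Nat.Coprime d k then d.totient * k ^ (n / d) else 0) := by
    intro d hd
    obtain ⟨hdn, -⟩ := Nat.mem_divisors.mp hd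
    have hdpos : 0 < d := Nat.pos_of_dvd_of_pos hdn hn
    set e := n / d with he
    have hed : e * d = n := Nat.div_mul_cancel hdn
    have hepos : 0 < e := Nat.div_pos (Nat.le_of_dvd hn hdn) hdpos
    have hgcd_eq : ∀ m2 : ℕ, n / Nat.gcd m2 n = d → Nat.gcd m2 n = e := by
      intro m2 h
      rw [he, ← h, Nat.div_div_self (Nat.gcd_dvd_right m2 n) hn.ne']
    have step1 : ∑ m ∈ (Finset.range (k * n)).filter (fun m => n / Nat.gcd m n = d),
          (if k ∣ m / Nat.gcd m n then k ^ Nat.gcd m n else 0)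
        = ∑ m ∈ (Finset.range (k * n)).filter (fun m => n / Nat.gcd m n = d),
          (if k ∣ m / e then k ^ e else 0) := by
      refine Finset.sum_congr rfl (fun m2 hm2 => ?_)
      rw [hgcd_eq m2 (Finset.mem_filter.mp hm2).2]
    rw [step1, ← Finset.sum_filter, Finset.filter_filter, Finset.sum_const, smul_eq_mul]
    have decomp : ∀ m2 ∈ (Finset.range (k * n)).filter
          (fun m2 => n / Nat.gcd m2 n = d ∧ k ∣ m2 / e),
        m2 = e * (k * (m2 / (e * k))) ∧ m2 / (e * k) < d
          ∧ Nat.Coprime (k * (m2 / (e * k))) d := by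
      intro m2 hm2
      rw [Finset.mem_filter, Finset.mem_range] at hm2
      have hlt := hm2.1
      have hgd := hm2.2.1
      have hkd := hm2.2.2
      have hge : Nat.gcd m2 n = e := hgcd_eq m2 hgd
      have hem : e ∣ m2 := hge ▸ Nat.gcd_dvd_left m2 n
      obtain ⟨c, hc⟩ := hkd
      have hm2eq : m2 = e * (k * c) := by
        rw [← hc]; exact (Nat.mul_div_cancel' hem).symm
      have hcval : m2 / (e * k) = c := by
        rw [hm2eq, ← Nat.mul_assoc]
        exact Nat.mul_div_cancel_left c (Nat.mul_pos hepos hk)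
      have hclt : c < d := by
        have h7 : e * k * c < e * k * d := by
          calc e * k * c = m2 := by rw [hm2eq]; ring
            _ < k * n := hlt
            _ = e * k * d := by rw [← hed]; ring
        exact Nat.lt_of_mul_lt_mul_left h7
      have hcop : Nat.Coprime (k * c) d := by
        have h8 : e * Nat.gcd (k * c) d = e * 1 := by
          calc e * Nat.gcd (k * c) d = Nat.gcd (e * (k * c)) (e * d) :=
                (Nat.gcd_mul_left e _ d).symm
            _ = Nat.gcd m2 n := by rw [← hm2eq, hed]
            _ = e := hge
            _ = e * 1 := (Nat.mul_one e).symm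
        exact Nat.eq_of_mul_eq_mul_left hepos h8
      rw [hcval]
      exact ⟨hm2eq, hclt, hcop⟩
    by_cases hco : Nat.Coprime d k
    · rw [if_pos hco]
      congr 1
      rw [Nat.totient_eq_card_coprime]
      apply Finset.card_nbij' (i := fun m2 => m2 / (e * k)) (j := fun s => e * (k * s))
      · intro m2 hm2
        obtain ⟨h1, h2, h3⟩ := decomp m2 hm2
        rw [Finset.mem_coe, Finset.mem_filter, Finset.mem_range]
        exact ⟨h2, (Nat.Coprime.coprime_dvd_left (dvd_mul_left _ k) h3).symm⟩
      · intro s hs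
        rw [Finset.mem_coe, Finset.mem_filter, Finset.mem_range] at hs
        obtain ⟨hs1, hs2⟩ := hs
        have hco2 : Nat.Coprime (k * s) d := Nat.Coprime.mul hco.symm hs2.symm
        have hg2 : Nat.gcd (e * (k * s)) n = e := by
          rw [← hed, Nat.gcd_mul_left, Nat.Coprime.gcd_eq_one hco2, Nat.mul_one]
        beta_reduce
        rw [Finset.mem_coe, Finset.mem_filter, Finset.mem_range]
        refine ⟨?_, ?_, ?_⟩
        · calc e * (k * s) = (e * k) * s := by ring
            _ < (e * k) * d := (Nat.mul_lt_mul_left (Nat.mul_pos hepos hk)).mpr hs1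
            _ = k * n := by rw [← hed]; ring
        · rw [hg2, ← hed, Nat.mul_div_cancel_left d hepos]
        · rw [Nat.mul_div_cancel_left _ hepos]
          exact dvd_mul_right k s
      · intro m2 hm2
        exact (decomp m2 hm2).1.symm
      · intro s hs
        beta_reduce
        rw [← Nat.mul_assoc]
        exact Nat.mul_div_cancel_left s (Nat.mul_pos hepos hk)
    · rw [if_neg hco]
      have hemp : (Finset.range (k * n)).filter
          (fun m2 => n / Nat.gcd m2 n = d ∧ k ∣ m2 / e) = ∅ := by
        refine Finset.eq_empty_of_forall_notMem (fun m2 hm2 => ?_)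
        obtain ⟨-, -, h3⟩ := decomp m2 hm2
        exact hco (Nat.Coprime.coprime_dvd_left (dvd_mul_right k _) h3).symm
      rw [hemp, Finset.card_empty, Nat.zero_mul]
  rw [hdiv]
  refine Eq.symm ?_
  calc ∑ d ∈ n.divisors.filter (fun d => Nat.Coprime d k), d.totient * k ^ (n / d)
      = ∑ d ∈ n.divisors, (if Nat.Coprime d k then d.totient * k ^ (n / d) else 0) :=
        Finset.sum_filter _ _
    _ = ∑ d ∈ n.divisors, ∑ m ∈ (Finset.range (k * n)).filter (fun m => n / Nat.gcd m n = d),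
          (if k ∣ m / Nat.gcd m n then k ^ Nat.gcd m n else 0) :=
        (Finset.sum_congr rfl main).symm
    _ = ∑ m ∈ Finset.range (k * n), (if k ∣ m / Nat.gcd m n then k ^ Nat.gcd m n else 0) :=
        Finset.sum_fiberwise_of_maps_to
          (fun m _ => Nat.mem_divisors.mpr
            ⟨Nat.div_dvd_of_dvd (Nat.gcd_dvd_right m n), hn.ne'⟩) _

end PsiAux5

/-- The number of orbits of the cyclic group generated by ψ acting on (ZMod k)^n
equals (1/(kn)) · Σ_{d ∣ a} φ(d) k^{n/d}, where a is the largest divisor of n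
coprime to k (the identity is stated multiplied through by kn). -/
theorem number_of_orbits (k n a : ℕ) (hk : 0 < k) (hn : 0 < n)
    (han : a ∣ n) (hak : Nat.Coprime a k)
    (hmax : ∀ d : ℕ, d ∣ n → Nat.Coprime d k → d ≤ a) :
    Nat.card {S : Set (Fin n → ZMod k) //
        ∃ v : Fin n → ZMod k, S = {w | ∃ i : ℕ, (psi k n)^[i] v = w}} * (k * n) =
      ∑ d ∈ a.divisors, d.totient * k ^ (n / d) := by
  classical
  haveI : NeZero k := ⟨hk.ne'⟩
  haveI : NeZero (k * n) := ⟨(Nat.mul_pos hk hn).ne'⟩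
  letI A := psiAddAction k n hk hn
  have horb : ∀ v : Fin n → ZMod k,
      {w | ∃ i : ℕ, (psi k n)^[i] v = w} = AddAction.orbit (ZMod (k * n)) v := by
    intro v
    ext w
    constructor
    · rintro ⟨i, rfl⟩
      refine AddAction.mem_orbit_iff.mpr ⟨(i : ZMod (k * n)), ?_⟩
      show (psi k n)^[((i : ZMod (k * n))).val] v = (psi k n)^[i] v
      rw [ZMod.val_natCast, ← PsiAux2.psi_iterate_mod hk hn]
    · intro hw
      obtain ⟨gz, hgz⟩ := AddAction.mem_orbit_iff.mp hw
      exact ⟨gz.val, hgz⟩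
  have e1 : Nat.card {S : Set (Fin n → ZMod k) //
      ∃ v : Fin n → ZMod k, S = {w | ∃ i : ℕ, (psi k n)^[i] v = w}}
      = Nat.card (AddAction.orbitRel.Quotient (ZMod (k * n)) (Fin n → ZMod k)) := by
    refine (Nat.card_congr (Equiv.ofBijective
      (fun (q : AddAction.orbitRel.Quotient (ZMod (k * n)) (Fin n → ZMod k)) =>
        (⟨{w | ∃ i : ℕ, (psi k n)^[i] q.out = w}, q.out, rfl⟩ :
          {S : Set (Fin n → ZMod k) //
            ∃ v : Fin n → ZMod k, S = {w | ∃ i : ℕ, (psi k n)^[i] v = w}}))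
      ⟨?_, ?_⟩)).symm
    · intro q1 q2 hq
      have h1 : AddAction.orbit (ZMod (k * n)) q1.out
          = AddAction.orbit (ZMod (k * n)) q2.out := by
        have h2 := congrArg Subtype.val hq
        simpa only [horb] using h2
      exact Quotient.out_equiv_out.mp (AddAction.orbit_eq_iff.mp h1)
    · rintro ⟨S, v, rfl⟩
      refine ⟨Quotient.mk (AddAction.orbitRel (ZMod (k * n)) (Fin n → ZMod k)) v, ?_⟩
      refine Subtype.ext ?_
      show {w | ∃ i : ℕ, (psi k n)^[i] _ = w} = {w | ∃ i : ℕ, (psi k n)^[i] v = w}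
      rw [horb, horb]
      have hrel : (Quotient.mk (AddAction.orbitRel (ZMod (k * n)) (Fin n → ZMod k)) v).out
          ∈ AddAction.orbit (ZMod (k * n)) v :=
        @Quotient.mk_out _ (AddAction.orbitRel (ZMod (k * n)) (Fin n → ZMod k)) v
      exact AddAction.orbit_eq_iff.mpr hrel
  rw [e1]
  haveI : ∀ gz : ZMod (k * n), Fintype (AddAction.fixedBy (Fin n → ZMod k) gz) :=
    fun gz => Fintype.ofFinite _
  haveI : Fintype (AddAction.orbitRel.Quotient (ZMod (k * n)) (Fin n → ZMod k)) :=
    Fintype.ofFinite _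
  have burn := AddAction.sum_card_fixedBy_eq_card_orbits_mul_card_addGroup
    (ZMod (k * n)) (Fin n → ZMod k)
  have e3 : ∀ gz : ZMod (k * n), Fintype.card (AddAction.fixedBy (Fin n → ZMod k) gz)
      = if k ∣ gz.val / Nat.gcd gz.val n then k ^ Nat.gcd gz.val n else 0 := by
    intro gz
    rw [← Nat.card_eq_fintype_card, ← PsiAux4.card_fixed hk hn gz.val]
    exact Nat.card_congr (Equiv.subtypeEquivRight (fun v => Iff.rfl))
  calc Nat.card (AddAction.orbitRel.Quotient (ZMod (k * n)) (Fin n → ZMod k)) * (k * n)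
      = Fintype.card (AddAction.orbitRel.Quotient (ZMod (k * n)) (Fin n → ZMod k))
          * Fintype.card (ZMod (k * n)) := by
        rw [Nat.card_eq_fintype_card, ZMod.card]
    _ = ∑ gz : ZMod (k * n), Fintype.card (AddAction.fixedBy (Fin n → ZMod k) gz) := burn.symm
    _ = ∑ m ∈ Finset.range (k * n), (if k ∣ m / Nat.gcd m n then k ^ Nat.gcd m n else 0) := by
        refine Finset.sum_nbij' (i := fun gz : ZMod (k * n) => gz.val)
          (j := fun m : ℕ => (m : ZMod (k * n))) ?_ ?_ ?_ ?_ ?_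
        · exact fun gz _ => Finset.mem_range.mpr (ZMod.val_lt gz)
        · exact fun m _ => Finset.mem_univ _
        · intro gz _
          show ((gz.val : ℕ) : ZMod (k * n)) = gz
          rw [ZMod.natCast_val, ZMod.cast_id]
        · intro m hm
          show ((m : ZMod (k * n))).val = m
          rw [ZMod.val_natCast, Nat.mod_eq_of_lt (Finset.mem_range.mp hm)]
        · exact fun gz _ => e3 gz
    _ = ∑ d ∈ a.divisors, d.totient * k ^ (n / d) :=
        PsiAux5.keysum hk hn a han hak hmax
end

section
/- Let n ≥ 2, a_L, a_R ∈ ℝ, and let g : ℝ^n → ℝ^n be defined by g(y) = A_L y + e₁ if y₁ ≤ 0 and g(y) = A_R y + e₁ if y₁ ≥ 0, where A_L, A_R are companion matrices with first column zero except bottom entry a_L (resp. a_R), and superdiagonal of 1's. Let h : ℝ → ℝ be h(z) = a_L z + 1 for z ≤ 0 and h(z) = a_R z + 1 for z ≥ 0. Then for all x ∈ ℝ^n, g^n(x) = (h(x₁), h(x₂+1)−1, ..., h(xₙ+1)−1), i.e. the n-th iterate of g is (up to translation) a direct product of n copies of h. -/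
/-- The n×n companion matrix with superdiagonal 1's, bottom-left entry a, other entries 0. -/
def compMat (n : ℕ) (a : ℝ) : Matrix (Fin n) (Fin n) ℝ :=
  fun i j => if (i : ℕ) + 1 = (j : ℕ) then 1
    else if (i : ℕ) = n - 1 ∧ (j : ℕ) = 0 then a else 0

/-- The piecewise-linear map g(y) = A_L y + e₁ (y₁ ≤ 0), A_R y + e₁ (y₁ ≥ 0). -/
noncomputable def gmap (n : ℕ) [NeZero n] (aL aR : ℝ) : (Fin n → ℝ) → (Fin n → ℝ) :=
  fun y => (if y 0 ≤ 0 then compMat n aL else compMat n aR).mulVec y + Pi.single 0 1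

/-- The skew tent map h(z) = a_L z + 1 (z ≤ 0), a_R z + 1 (z ≥ 0). -/
noncomputable def stm (aL aR : ℝ) : ℝ → ℝ :=
  fun z => if z ≤ 0 then aL * z + 1 else aR * z + 1

lemma compMat_mulVec (n : ℕ) [NeZero n] (a : ℝ) (y : Fin n → ℝ) (i : Fin n) :
    (compMat n a).mulVec y i = if h : (i:ℕ) + 1 < n then y ⟨(i:ℕ)+1, h⟩ else a * y 0 := by
  have hn := Nat.pos_of_ne_zero (NeZero.ne n)
  simp only [Matrix.mulVec, dotProduct]
  by_cases h : (i:ℕ) + 1 < n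
  · rw [dif_pos h]
    have hterm : ∀ j : Fin n, compMat n a i j * y j =
        if j = ⟨(i:ℕ)+1, h⟩ then y j else 0 := by
      intro j
      simp only [compMat]
      by_cases hj : (j:ℕ) = (i:ℕ) + 1
      · rw [if_pos hj.symm, one_mul, if_pos (Fin.ext (by simp [hj]))]
      · rw [if_neg (fun hc => hj hc.symm)]
        rw [if_neg (fun hc : j = _ => hj (by simpa using congrArg Fin.val hc))]
        split_ifs with hc
        · exfalso; have := i.isLt; omega
        · exact zero_mul _
    rw [Finset.sum_congr rfl (fun j _ => hterm j), Finset.sum_ite_eq' Finset.univ]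
    simp
  · rw [dif_neg h]
    have hi : (i:ℕ) = n - 1 := by have := i.isLt; omega
    have hterm : ∀ j : Fin n, compMat n a i j * y j =
        if j = 0 then a * y 0 else 0 := by
      intro j
      simp only [compMat]
      rw [if_neg (by have := j.isLt; omega)]
      by_cases hj : j = 0
      · rw [if_pos ⟨hi, by simp [hj]⟩, hj, if_pos rfl]
      · rw [if_neg (fun hc => hj (Fin.ext (by simpa using hc.2))), if_neg hj, zero_mul]
    rw [Finset.sum_congr rfl (fun j _ => hterm j), Finset.sum_ite_eq' Finset.univ]
    simp

lemma gmap_apply (n : ℕ) [NeZero n] (aL aR : ℝ) (y : Fin n → ℝ) (i : Fin n) :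
    gmap n aL aR y i =
      (if h : (i:ℕ) + 1 < n then y ⟨(i:ℕ)+1, h⟩ else stm aL aR (y 0) - 1)
      + (if i = 0 then 1 else 0) := by
  unfold gmap
  by_cases h0 : y 0 ≤ 0
  · rw [if_pos h0]
    simp only [Pi.add_apply, compMat_mulVec, Pi.single_apply]
    congr 1
    split_ifs with h
    · rfl
    · unfold stm; rw [if_pos h0]; ring
  · rw [if_neg h0]
    simp only [Pi.add_apply, compMat_mulVec, Pi.single_apply]
    congr 1
    split_ifs with h
    · rfl
    · unfold stm; rw [if_neg h0]; ring


lemma gmap_key (n : ℕ) [NeZero n] (hn : 2 ≤ n) (aL aR : ℝ) (x : Fin n → ℝ) :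
    ∀ k (hk1 : 1 ≤ k) (hk2 : k ≤ n), ∀ i : Fin n,
      (gmap n aL aR)^[k] x i =
        (if h : (i:ℕ) + k < n then x ⟨(i:ℕ)+k, h⟩
         else stm aL aR (x ⟨(i:ℕ)+k-n, by have := i.isLt; omega⟩
              + (if (i:ℕ)+k = n then 0 else 1)) - 1)
        + (if i = 0 then 1 else 0) := by
  intro k
  induction k with
  | zero => omega
  | succ k ih =>
    intro hk1 hkn i
    by_cases hk0 : k = 0
    · subst hk0
      rw [Function.iterate_one, gmap_apply]
      congr 1
      by_cases h : (i:ℕ) + 1 < n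
      · rw [dif_pos h, dif_pos (show (i:ℕ) + (0+1) < n by omega)]
      · have hlt := i.isLt
        rw [dif_neg h, dif_neg (show ¬ (i:ℕ) + (0+1) < n by omega),
            if_pos (show (i:ℕ) + (0+1) = n by omega), add_zero]
        congr 2
        exact congrArg x (Fin.ext (by simp))
    · have ih' := ih (by omega) (by omega)
      rw [Function.iterate_succ_apply', gmap_apply]
      have hy0 : (gmap n aL aR)^[k] x 0 = x ⟨k, by omega⟩ + 1 := by
        rw [ih' 0]
        rw [dif_pos (show ((0:Fin n):ℕ) + k < n by simp; omega)]
        simp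
      congr 1
      by_cases h : (i:ℕ) + 1 < n
      · rw [dif_pos h, ih' ⟨(i:ℕ)+1, h⟩]
        have hne : (⟨(i:ℕ)+1, h⟩ : Fin n) ≠ 0 := by
          intro hc; have := congrArg Fin.val hc; simp at this
        rw [if_neg hne, add_zero]
        by_cases h2 : ((⟨(i:ℕ)+1, h⟩ : Fin n) : ℕ) + k < n
        · rw [dif_pos h2, dif_pos (show (i:ℕ) + (k+1) < n by simp at h2; omega)]
          exact congrArg x (Fin.ext (by simp; try omega))
        · rw [dif_neg h2, dif_neg (show ¬ (i:ℕ) + (k+1) < n by simp at h2; omega)]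
          congr 2
          congr 1
          · exact congrArg x (Fin.ext (by simp; omega))
          · have hiff : ((((⟨(i:ℕ)+1, h⟩ : Fin n) : ℕ)) + k = n) ↔ ((i:ℕ) + (k+1) = n) := by
              simp; omega
            simp only [hiff]
      · rw [dif_neg h, hy0]
        have hlt := i.isLt
        rw [dif_neg (show ¬ (i:ℕ) + (k+1) < n by omega),
            if_neg (show (i:ℕ) + (k+1) ≠ n by omega)]
        exact congrArg (fun t => stm aL aR (x t + 1) - 1)
          (show (⟨k, by omega⟩ : Fin n) = ⟨(i:ℕ)+(k+1)-n, by omega⟩ from Fin.ext (by simp; omega))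

/-- The n-th iterate of g is (up to translation) a direct product of n copies of h:
g^n(x) = (h(x₁), h(x₂+1)−1, ..., h(xₙ+1)−1). -/
theorem gmap_iterate_directProduct (n : ℕ) [NeZero n] (hn : 2 ≤ n) (aL aR : ℝ) :
    ∀ x : Fin n → ℝ,
      (gmap n aL aR)^[n] x =
        fun j => if j = 0 then stm aL aR (x 0) else stm aL aR (x j + 1) - 1 := by
  intro x
  funext j
  rw [gmap_key n hn aL aR x n (by omega) le_rfl j]
  have hj := j.isLt
  rw [dif_neg (show ¬ (j:ℕ) + n < n by omega)]
  by_cases h0 : j = 0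
  · subst h0
    rw [if_pos rfl, if_pos rfl, if_pos (show ((0:Fin n):ℕ) + n = n by simp)]
    have e : stm aL aR (x ⟨((0:Fin n):ℕ)+n-n, by simp; omega⟩ + 0) = stm aL aR (x 0) := by
      rw [add_zero]
      exact congrArg (fun t => stm aL aR (x t)) (Fin.ext (by simp))
    rw [e]; ring
  · have hv : (j:ℕ) ≠ 0 := fun hc => h0 (Fin.ext (by simp [hc]))
    rw [if_neg h0, if_neg h0, if_neg (show (j:ℕ) + n ≠ n by omega), add_zero]
    exact congrArg (fun t => stm aL aR (x t + 1) - 1) (Fin.ext (by simp))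
end

section
/- Let h(z) = a_L z + 1 for z ≤ 0 and h(z) = a_R z + 1 for z ≥ 0, with a_L > 0 and a_R < 0. Suppose the points h^i(0) for 0 ≤ i ≤ 2k+1 satisfy the ordering h²(0) < h^{k+2}(0) < h³(0) < ⋯ < h^{2k−1}(0) < h^k(0) < 0 < h^{2k}(0) < h^{k+1}(0) < h^{2k+1}(0) < h(0). Define intervals I₀ = [h^{k+1}(0), h(0)] and I_i = [h^{i+1}(0), h^{i+k+1}(0)] for 1 ≤ i ≤ k−1. Then the intervals I₀, ..., I_{k−1} are mutually disjoint and h(I_i) = I_{(i+1) mod k} for all 0 ≤ i ≤ k−1. -/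
lemma img_pos_aux (a b c d : ℝ) (ha : 0 < a) :
    (fun z => a * z + b) '' Set.Icc c d = Set.Icc (a * c + b) (a * d + b) := by
  ext y
  simp only [Set.mem_image, Set.mem_Icc]
  constructor
  · rintro ⟨x, ⟨h1, h2⟩, rfl⟩
    constructor <;> nlinarith
  · rintro ⟨h1, h2⟩
    refine ⟨(y - b) / a, ⟨?_, ?_⟩, ?_⟩
    · rw [le_div_iff₀ ha]; nlinarith
    · rw [div_le_iff₀ ha]; nlinarith
    · field_simp
      ring

lemma img_neg_aux (a b c d : ℝ) (ha : a < 0) :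
    (fun z => a * z + b) '' Set.Icc c d = Set.Icc (a * d + b) (a * c + b) := by
  ext y
  simp only [Set.mem_image, Set.mem_Icc]
  constructor
  · rintro ⟨x, ⟨h1, h2⟩, rfl⟩
    constructor <;> nlinarith
  · rintro ⟨h1, h2⟩
    refine ⟨(y - b) / a, ⟨?_, ?_⟩, ?_⟩
    · rw [le_div_iff_of_neg ha]; nlinarith
    · rw [div_le_iff_of_neg ha]; nlinarith
    · field_simp [ha.ne]
      ring

lemma disj_aux (a b c d : ℝ) (h : b < c) : Disjoint (Set.Icc a b) (Set.Icc c d) := by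
  rw [Set.disjoint_left]
  rintro x hx hy
  have h2 := hx.2
  have h3 := hy.1
  linarith

/-- Under the orbit ordering of Lemma 6.1, the intervals I₀ = [h^{k+1}(0), h(0)],
I_i = [h^{i+1}(0), h^{i+k+1}(0)] (1 ≤ i ≤ k−1) are mutually disjoint and
h(I_i) = I_{(i+1) mod k}. -/
theorem skew_tent_cycle_of_intervals (k : ℕ) (hk : 2 ≤ k) (aL aR : ℝ)
    (haL : 0 < aL) (haR : aR < 0)
    (h : ℝ → ℝ) (hdef : h = stm aL aR)
    (hord1 : ∀ i : ℕ, 2 ≤ i → i ≤ k - 1 → h^[i] 0 < h^[k + i] 0)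
    (hord2 : ∀ i : ℕ, 2 ≤ i → i ≤ k - 1 → h^[k + i] 0 < h^[i + 1] 0)
    (hord3 : h^[k] 0 < 0)
    (hord4 : 0 < h^[2 * k] 0)
    (hord5 : h^[2 * k] 0 < h^[k + 1] 0)
    (hord6 : h^[k + 1] 0 < h^[2 * k + 1] 0)
    (hord7 : h^[2 * k + 1] 0 < h^[1] 0)
    (I : ℕ → Set ℝ)
    (hI0 : I 0 = Set.Icc (h^[k + 1] 0) (h^[1] 0))
    (hIi : ∀ i : ℕ, 1 ≤ i → i ≤ k - 1 → I i = Set.Icc (h^[i + 1] 0) (h^[i + k + 1] 0)) :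
    (∀ i j : ℕ, i < k → j < k → i ≠ j → Disjoint (I i) (I j)) ∧
      (∀ i : ℕ, i < k → h '' I i = I ((i + 1) % k)) := by
  have hneg : ∀ z : ℝ, z ≤ 0 → h z = aL * z + 1 := by
    intro z hz; simp [hdef, stm, hz]
  have hpos : ∀ z : ℝ, 0 ≤ z → h z = aR * z + 1 := by
    intro z hz
    rcases eq_or_lt_of_le hz with rfl | h'
    · norm_num [hdef, stm]
    · simp [hdef, stm, not_le.mpr h']
  have hp1 : h^[1] 0 = 1 := by
    simp [hdef, stm]
  -- single step of the monotone chain on indices 2..k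
  have hstep1 : ∀ t : ℕ, 2 ≤ t → t + 1 ≤ k → h^[t] 0 < h^[t + 1] 0 := by
    intro t h2 htk
    have a := hord1 t h2 (by omega)
    have b := hord2 t h2 (by omega)
    linarith
  have hmono : ∀ n m : ℕ, 2 ≤ m → m < n → n ≤ k → h^[m] 0 < h^[n] 0 := by
    intro n
    induction n with
    | zero => intro m _ hmn _; omega
    | succ n ih =>
      intro m h2 hmn hnk
      rcases Nat.lt_or_ge m n with h' | h'
      · exact lt_trans (ih m h2 h' (by omega)) (hstep1 n (by omega) hnk)
      · have hm : m = n := by omega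
        subst hm
        exact hstep1 m h2 hnk
  have hmono_le : ∀ m n : ℕ, 2 ≤ m → m ≤ n → n ≤ k → h^[m] 0 ≤ h^[n] 0 := by
    intro m n h2 hmn hnk
    rcases eq_or_lt_of_le hmn with rfl | h'
    · exact le_rfl
    · exact le_of_lt (hmono n m h2 h' hnk)
  -- negativity of middle points
  have hneg_pt : ∀ m : ℕ, 2 ≤ m → m ≤ k → h^[m] 0 < 0 := by
    intro m h2 hmk
    exact lt_of_le_of_lt (hmono_le m k h2 hmk le_rfl) hord3
  -- upper endpoints of middle intervals are negative
  have hub_neg : ∀ i : ℕ, 1 ≤ i → i ≤ k - 2 → h^[i + k + 1] 0 < 0 := by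
    intro i hi1 hik
    have hb := hord2 (i + 1) (by omega) (by omega)
    rw [show k + (i + 1) = i + k + 1 by omega] at hb
    have hc : h^[i + 1 + 1] 0 ≤ h^[k] 0 := hmono_le (i + 1 + 1) k (by omega) (by omega) le_rfl
    linarith
  -- right endpoint of I_j is left of left endpoint of I_0
  have Rlt : ∀ j : ℕ, 1 ≤ j → j ≤ k - 1 → h^[j + k + 1] 0 < h^[k + 1] 0 := by
    intro j hj1 hjk
    rcases Nat.lt_or_ge j (k - 1) with hj | hj
    · have := hub_neg j hj1 (by omega)
      linarith
    · have hje : j = k - 1 := by omega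
      subst hje
      rw [show k - 1 + k + 1 = 2 * k by omega]
      exact hord5
  -- right endpoint of I_i is left of left endpoint of I_j for 1 ≤ i < j ≤ k-1
  have key : ∀ i j : ℕ, 1 ≤ i → i < j → j ≤ k - 1 → h^[i + k + 1] 0 < h^[j + 1] 0 := by
    intro i j hi1 hij hjk
    have hb := hord2 (i + 1) (by omega) (by omega)
    rw [show k + (i + 1) = i + k + 1 by omega] at hb
    have hc : h^[i + 1 + 1] 0 ≤ h^[j + 1] 0 :=
      hmono_le (i + 1 + 1) (j + 1) (by omega) (by omega) (by omega)
    linarith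
  have main : ∀ i j : ℕ, i < k → j < k → i < j → Disjoint (I i) (I j) := by
    intro i j hik hjk hij
    have hj1 : 1 ≤ j := by omega
    have hjk1 : j ≤ k - 1 := by omega
    rw [hIi j hj1 hjk1]
    rcases Nat.eq_zero_or_pos i with rfl | hi1
    · rw [hI0]
      exact (disj_aux _ _ _ _ (Rlt j hj1 hjk1)).symm
    · rw [hIi i hi1 (by omega)]
      exact disj_aux _ _ _ _ (key i j hi1 hij hjk1)
  constructor
  · intro i j hik hjk hne
    rcases Nat.lt_or_ge i j with hij | hij
    · exact main i j hik hjk hij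
    · exact (main j i hjk hik (by omega)).symm
  · intro i hik
    rcases Nat.eq_zero_or_pos i with rfl | hi1
    · -- i = 0 : I 0 ⊂ (0,∞), maps to I 1
      rw [show (0 + 1) % k = 1 from Nat.mod_eq_of_lt (by omega), hI0,
        hIi 1 le_rfl (by omega)]
      have hL0pos : 0 < h^[k + 1] 0 := lt_trans hord4 hord5
      have himg : h '' Set.Icc (h^[k + 1] 0) (h^[1] 0)
          = (fun z => aR * z + 1) '' Set.Icc (h^[k + 1] 0) (h^[1] 0) :=
        Set.image_congr (fun x hx => hpos x (le_of_lt (lt_of_lt_of_le hL0pos hx.1)))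
      rw [himg, img_neg_aux aR 1 _ _ haR]
      have e1 : h^[1 + 1] 0 = aR * h^[1] 0 + 1 := by
        rw [Function.iterate_succ_apply' h 1 0]
        exact hpos _ (by rw [hp1]; norm_num)
      have e2 : h^[k + 1 + 1] 0 = aR * h^[k + 1] 0 + 1 := by
        rw [Function.iterate_succ_apply' h (k + 1) 0]
        exact hpos _ (le_of_lt hL0pos)
      rw [show 1 + k + 1 = k + 1 + 1 by omega, e1, e2]
    · rcases Nat.lt_or_ge i (k - 1) with hikk | hikk
      · -- middle case: 1 ≤ i ≤ k - 2, I i ⊂ (-∞,0)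
        rw [show (i + 1) % k = i + 1 from Nat.mod_eq_of_lt (by omega),
          hIi i hi1 (by omega), hIi (i + 1) (by omega) (by omega)]
        have hub := hub_neg i hi1 (by omega)
        have hlb : h^[i + 1] 0 < 0 := hneg_pt (i + 1) (by omega) (by omega)
        have himg : h '' Set.Icc (h^[i + 1] 0) (h^[i + k + 1] 0)
            = (fun z => aL * z + 1) '' Set.Icc (h^[i + 1] 0) (h^[i + k + 1] 0) :=
          Set.image_congr (fun x hx => hneg x (le_of_lt (lt_of_le_of_lt hx.2 hub)))
        rw [himg, img_pos_aux aL 1 _ _ haL]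
        have e1 : h^[i + 1 + 1] 0 = aL * h^[i + 1] 0 + 1 := by
          rw [Function.iterate_succ_apply' h (i + 1) 0]
          exact hneg _ (le_of_lt hlb)
        have e2 : h^[i + k + 1 + 1] 0 = aL * h^[i + k + 1] 0 + 1 := by
          rw [Function.iterate_succ_apply' h (i + k + 1) 0]
          exact hneg _ (le_of_lt hub)
        rw [show i + 1 + k + 1 = i + k + 1 + 1 by omega, e1, e2]
      · -- i = k - 1 : straddles 0, maps onto I 0
        have hie : i = k - 1 := by omega
        subst hie
        rw [show (k - 1 + 1) % k = 0 by rw [show k - 1 + 1 = k by omega]; exact Nat.mod_self k,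
          hI0, hIi (k - 1) (by omega) le_rfl]
        rw [show k - 1 + 1 = k by omega, show k - 1 + k + 1 = 2 * k by omega]
        rw [← Set.Icc_union_Icc_eq_Icc (le_of_lt hord3) (le_of_lt hord4), Set.image_union]
        have e1 : h '' Set.Icc (h^[k] 0) 0 = Set.Icc (h^[k + 1] 0) 1 := by
          rw [Set.image_congr (fun x hx => hneg x hx.2), img_pos_aux aL 1 _ _ haL,
            Function.iterate_succ_apply' h k 0, hneg _ (le_of_lt hord3)]
          norm_num
        have e2 : h '' Set.Icc 0 (h^[2 * k] 0) = Set.Icc (h^[2 * k + 1] 0) 1 := by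
          rw [Set.image_congr (fun x hx => hpos x hx.1), img_neg_aux aR 1 _ _ haR,
            Function.iterate_succ_apply' h (2 * k) 0, hpos _ (le_of_lt hord4)]
          norm_num
        rw [e1, e2,
          Set.union_eq_self_of_subset_right (Set.Icc_subset_Icc (le_of_lt hord6) le_rfl), hp1]
end

section
/- Let h(z) = a_L z + 1 for z ≤ 0 and h(z) = a_R z + 1 for z ≥ 0 with a_L ∈ (0,1) and a_R < 0, and assume the orbit ordering of Lemma on the I_i holds, so that h maps each I_i onto I_{(i+1) mod k} with I_{k−1} the unique interval containing 0. Then for any point y whose forward orbit under h cycles through the intervals I₀, ..., I_{k−1}, the derivative product ∏_{i=0}^{k−1} h'(h^i(y)) equals either a_L^{k−2} a_R² or a_L^{k−1} a_R, according to whether the orbit visits the region z > 0 twice or once per cycle. -/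
/-- The slope (derivative) of the skew tent map. -/
noncomputable def stmDeriv (aL aR : ℝ) : ℝ → ℝ :=
  fun z => if z < 0 then aL else aR

/-- For a point y whose forward orbit cycles through the intervals I₀, ..., I_{k−1}
(never hitting 0), the derivative product over one cycle equals a_L^{k−2} a_R² or
a_L^{k−1} a_R, according to whether the orbit visits z > 0 twice or once per cycle. -/
theorem derivative_product_over_cycle (k : ℕ) (hk : 2 ≤ k) (aL aR : ℝ)
    (haL0 : 0 < aL) (haL1 : aL < 1) (haR : aR < 0)
    (h : ℝ → ℝ) (hdef : h = stm aL aR)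
    (hord1 : ∀ i : ℕ, 2 ≤ i → i ≤ k - 1 → h^[i] 0 < h^[k + i] 0)
    (hord2 : ∀ i : ℕ, 2 ≤ i → i ≤ k - 1 → h^[k + i] 0 < h^[i + 1] 0)
    (hord3 : h^[k] 0 < 0)
    (hord4 : 0 < h^[2 * k] 0)
    (hord5 : h^[2 * k] 0 < h^[k + 1] 0)
    (hord6 : h^[k + 1] 0 < h^[2 * k + 1] 0)
    (hord7 : h^[2 * k + 1] 0 < h^[1] 0)
    (I : ℕ → Set ℝ)
    (hI0 : I 0 = Set.Icc (h^[k + 1] 0) (h^[1] 0))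
    (hIi : ∀ i : ℕ, 1 ≤ i → i ≤ k - 1 → I i = Set.Icc (h^[i + 1] 0) (h^[i + k + 1] 0))
    (y : ℝ) (i0 : ℕ) (hi0 : i0 < k)
    (hy : ∀ i : ℕ, h^[i] y ∈ I ((i0 + i) % k))
    (hne : ∀ i : ℕ, h^[i] y ≠ 0) :
    (((Finset.range k).filter (fun i => 0 < h^[i] y)).card = 1 ∨
        ((Finset.range k).filter (fun i => 0 < h^[i] y)).card = 2) ∧
      (((Finset.range k).filter (fun i => 0 < h^[i] y)).card = 2 →
        ∏ i ∈ Finset.range k, stmDeriv aL aR (h^[i] y) = aL ^ (k - 2) * aR ^ 2) ∧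
      (((Finset.range k).filter (fun i => 0 < h^[i] y)).card = 1 →
        ∏ i ∈ Finset.range k, stmDeriv aL aR (h^[i] y) = aL ^ (k - 1) * aR) := by
  classical
  -- chain: h^[m] 0 ≤ h^[k] 0 for 2 ≤ m ≤ k
  have hchain : ∀ d m : ℕ, 2 ≤ m → m + d = k → h^[m] 0 ≤ h^[k] 0 := by
    intro d
    induction d with
    | zero =>
      intro m _ he
      have : m = k := by omega
      subst this; exact le_rfl
    | succ d ih =>
      intro m h2 he
      have hm1 : m ≤ k - 1 := by omega
      have a1 := hord1 m h2 hm1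
      have a2 := hord2 m h2 hm1
      exact le_trans (le_of_lt (lt_trans a1 a2)) (ih (m + 1) (by omega) (by omega))
  have hneg : ∀ m : ℕ, 2 ≤ m → m ≤ k → h^[m] 0 < 0 := fun m h2 hmk =>
    lt_of_le_of_lt (hchain (k - m) m h2 (by omega)) hord3
  -- sign facts
  have hsignpos : ∀ i : ℕ, (i0 + i) % k = 0 → 0 < h^[i] y := by
    intro i hri
    have hmem := hy i
    rw [hri, hI0] at hmem
    have h1 := hmem.1
    linarith [hord4, hord5]
  have hsignneg : ∀ i : ℕ, (i0 + i) % k ≠ 0 → (i0 + i) % k ≠ k - 1 → h^[i] y < 0 := by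
    intro i h0 h1
    have hmem := hy i
    obtain ⟨j, hj⟩ : ∃ j, (i0 + i) % k = j := ⟨_, rfl⟩
    rw [hj] at h0 h1 hmem
    have hjk : j < k := hj ▸ Nat.mod_lt _ (by omega)
    rw [hIi j (by omega) (by omega)] at hmem
    have hub := hmem.2
    have he : j + k + 1 = k + (j + 1) := by omega
    rw [he] at hub
    have a2 : h^[k + (j + 1)] 0 < h^[j + 2] 0 := hord2 (j + 1) (by omega) (by omega)
    have a3 := hneg (j + 2) (by omega) (by omega)
    linarith
  -- injectivity of residues
  have hinj : ∀ i, i < k → ∀ j, j < k → (i0 + i) % k = (i0 + j) % k → i = j := by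
    intro i hi j hj he
    have hm : i ≡ j [MOD k] := Nat.ModEq.add_left_cancel' i0 he
    rwa [Nat.ModEq, Nat.mod_eq_of_lt hi, Nat.mod_eq_of_lt hj] at hm
  -- the index with residue 0
  obtain ⟨a, hak, hra⟩ : ∃ a, a < k ∧ (i0 + a) % k = 0 := by
    by_cases h0 : i0 = 0
    · exact ⟨0, by omega, by simp [h0]⟩
    · exact ⟨k - i0, by omega, by rw [show i0 + (k - i0) = k by omega, Nat.mod_self]⟩
  -- the index with residue k-1
  have hrb : (i0 + (k - 1 - i0)) % k = k - 1 := by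
    rw [show i0 + (k - 1 - i0) = k - 1 by omega, Nat.mod_eq_of_lt (by omega)]
  have hbk : k - 1 - i0 < k := by omega
  have hab : a ≠ k - 1 - i0 := by
    intro he; rw [he, hrb] at hra; omega
  have hPS : ∀ i ∈ (Finset.range k).filter (fun i => 0 < h^[i] y),
      i = a ∨ i = k - 1 - i0 := by
    intro i hi
    rw [Finset.mem_filter, Finset.mem_range] at hi
    obtain ⟨hik, hipos⟩ := hi
    by_cases h0 : (i0 + i) % k = 0
    · exact Or.inl (hinj i hik a hak (by rw [h0, hra]))
    · by_cases h1 : (i0 + i) % k = k - 1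
      · exact Or.inr (hinj i hik (k - 1 - i0) hbk (by rw [h1, hrb]))
      · exact absurd hipos (not_lt.2 (le_of_lt (hsignneg i h0 h1)))
  have haS : a ∈ (Finset.range k).filter (fun i => 0 < h^[i] y) :=
    Finset.mem_filter.2 ⟨Finset.mem_range.2 hak, hsignpos a hra⟩
  have hSsub : (Finset.range k).filter (fun i => 0 < h^[i] y) ⊆ {a, k - 1 - i0} := by
    intro i hi
    rcases hPS i hi with h' | h' <;> simp [h']
  have hcard_le : ((Finset.range k).filter (fun i => 0 < h^[i] y)).card ≤ 2 :=
    le_trans (Finset.card_le_card hSsub) (le_of_eq (Finset.card_pair hab))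
  have hcard_ge : 1 ≤ ((Finset.range k).filter (fun i => 0 < h^[i] y)).card :=
    Finset.card_pos.2 ⟨a, haS⟩
  -- product computation
  have hR : ∀ i ∈ (Finset.range k).filter (fun i => 0 < h^[i] y),
      stmDeriv aL aR (h^[i] y) = aR := by
    intro i hi
    have hpos := (Finset.mem_filter.1 hi).2
    simp only [stmDeriv]
    exact if_neg (not_lt.2 (le_of_lt hpos))
  have hL : ∀ i ∈ (Finset.range k).filter (fun i => ¬ 0 < h^[i] y),
      stmDeriv aL aR (h^[i] y) = aL := by
    intro i hi
    have h2 := (Finset.mem_filter.1 hi).2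
    have hlt : h^[i] y < 0 := lt_of_le_of_ne (not_lt.1 h2) (hne i)
    simp only [stmDeriv]
    exact if_pos hlt
  have hsplit := Finset.prod_filter_mul_prod_filter_not (Finset.range k)
    (fun i => 0 < h^[i] y) (fun i => stmDeriv aL aR (h^[i] y))
  rw [Finset.prod_congr rfl hR, Finset.prod_congr rfl hL, Finset.prod_const,
    Finset.prod_const] at hsplit
  have hcards := Finset.card_filter_add_card_filter_not
    (s := Finset.range k) (p := fun i => 0 < h^[i] y)
  rw [Finset.card_range] at hcards
  refine ⟨by omega, ?_, ?_⟩
  · intro h2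
    have hc : ((Finset.range k).filter (fun i => ¬ 0 < h^[i] y)).card = k - 2 := by omega
    rw [← hsplit, h2, hc]; ring
  · intro h1
    have hc : ((Finset.range k).filter (fun i => ¬ 0 < h^[i] y)).card = k - 1 := by omega
    rw [← hsplit, h1, hc]; ring
end

section
/- Let k ≥ 2 and suppose a_L^{k−2} a_R² > 1 and a_L^{k−1} |a_R| > 1 with a_L > 0, a_R < 0. Let g : ℝ^n → ℝ^n be the piecewise-linear map g(y) = A_L y + e₁ (y₁ ≤ 0), A_R y + e₁ (y₁ ≥ 0) with companion matrices A_L, A_R as above. Then at any point y whose orbit avoids the switching hyperplanes, the Jacobian of g^{kn} is the diagonal matrix diag(∏_{i=0}^{k−1} h'(h^i(y₁)), ∏_{i=0}^{k−1} h'(h^i(y₂+1)), ..., ∏_{i=0}^{k−1} h'(h^i(yₙ+1))). -/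
namespace JacAux

variable {n : ℕ} [NeZero n]

lemma compMat_mulVec (a : ℝ) (z : Fin n → ℝ) (i : Fin n) :
    (compMat n a).mulVec z i =
      if h : (i : ℕ) + 1 < n then z ⟨(i : ℕ) + 1, h⟩ else a * z 0 := by
  rw [Matrix.mulVec, dotProduct]
  by_cases h : (i : ℕ) + 1 < n
  · rw [dif_pos h, Finset.sum_eq_single (⟨(i : ℕ) + 1, h⟩ : Fin n)]
    · have : (i : ℕ) + 1 = ((⟨(i : ℕ) + 1, h⟩ : Fin n) : ℕ) := rfl
      simp [compMat]
    · intro b _ hb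
      have h1 : ¬ ((i : ℕ) + 1 = (b : ℕ)) := by
        intro hc; exact hb (Fin.ext hc.symm)
      have h2 : ¬ ((i : ℕ) = n - 1) := by omega
      simp [compMat, h1, h2]
    · intro hmem; exact absurd (Finset.mem_univ _) hmem
  · rw [dif_neg h, Finset.sum_eq_single (0 : Fin n)]
    · have h2 : (i : ℕ) = n - 1 := by have := i.isLt; omega
      have h1 : ¬ ((i : ℕ) + 1 = ((0 : Fin n) : ℕ)) := by simp
      simp [compMat, h1, h2, mul_comm]
    · intro b _ hb
      have h1 : ¬ ((i : ℕ) + 1 = (b : ℕ)) := by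
        have := b.isLt; omega
      have h2 : ¬ ((b : ℕ) = 0) := by
        intro hc; exact hb (Fin.ext (by simpa using hc))
      simp [compMat, h1, h2]
    · intro hmem; exact absurd (Finset.mem_univ _) hmem

lemma gmap_apply (aL aR : ℝ) (z : Fin n → ℝ) (i : Fin n) :
    gmap n aL aR z i =
      (if h : (i : ℕ) + 1 < n then z ⟨(i : ℕ) + 1, h⟩ else stm aL aR (z 0) - 1)
        + (if i = 0 then 1 else 0) := by
  unfold gmap
  simp only [Pi.add_apply]
  congr 1
  · by_cases hz : z 0 ≤ 0
    · rw [if_pos hz, compMat_mulVec]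
      unfold stm
      rw [if_pos hz]
      split
      · rfl
      · ring
    · rw [if_neg hz, compMat_mulVec]
      unfold stm
      rw [if_neg hz]
      split
      · rfl
      · ring
  · simp [Pi.single_apply]

/-- Explicit formula for the first n iterates of gmap. -/
noncomputable def orbF (aL aR : ℝ) (x : Fin n → ℝ) (m : ℕ) : Fin n → ℝ := fun i =>
  if h : (i : ℕ) + m < n then
    (if (i : ℕ) = 0 ∧ 0 < m then x ⟨(i : ℕ) + m, h⟩ + 1 else x ⟨(i : ℕ) + m, h⟩)
  else
    stm aL aR (x ⟨((i : ℕ) + m - n) % n, Nat.mod_lt _ (NeZero.pos n)⟩ +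
      (if (i : ℕ) + m = n then 0 else 1)) - (if (i : ℕ) = 0 then 0 else 1)

lemma val_congr (x : Fin n → ℝ) {a b : ℕ} (ha : a < n) (hb : b < n) (h : a = b) :
    x ⟨a, ha⟩ = x ⟨b, hb⟩ := by subst h; rfl

lemma orbF_eq (hn : 2 ≤ n) (aL aR : ℝ) (x : Fin n → ℝ) :
    ∀ m, m ≤ n → (gmap n aL aR)^[m] x = orbF aL aR x m := by
  intro m
  induction m with
  | zero =>
    intro _
    funext i
    simp [orbF, i.isLt]
  | succ m ih =>
    intro hm
    have hm' : m < n := hm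
    rw [Function.iterate_succ_apply', ih (le_of_lt hm')]
    funext i
    rw [gmap_apply]
    have hizero : (if i = 0 then (1:ℝ) else 0) = (if (i : ℕ) = 0 then (1:ℝ) else 0) := by
      congr 1
      simp only [Fin.ext_iff, Fin.val_zero]
    rw [hizero]
    unfold orbF
    simp only [Fin.val_mk, Fin.val_zero, zero_add]
    by_cases hi1 : (i : ℕ) + 1 < n
    · rw [dif_pos hi1]
      try simp only [Fin.val_mk]
      by_cases hc : (i:ℕ) + (m+1) < n
      · rw [dif_pos (show (i:ℕ) + 1 + m < n by omega), dif_pos hc]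
        rw [if_neg (show ¬((i:ℕ)+1 = 0 ∧ 0 < m) by omega)]
        rw [val_congr x _ hc (show (i:ℕ)+1+m = (i:ℕ)+(m+1) from by omega)]
        by_cases hi0 : (i:ℕ) = 0
        · rw [if_pos hi0, if_pos ⟨hi0, Nat.succ_pos m⟩]
        · rw [if_neg hi0, if_neg (fun hh => hi0 hh.1), add_zero]
      · rw [dif_neg (show ¬((i:ℕ) + 1 + m < n) by omega), dif_neg hc]
        rw [if_neg (show ¬((i:ℕ)+1 = 0) by omega)]
        rw [val_congr x (Nat.mod_lt _ (NeZero.pos n)) (Nat.mod_lt _ (NeZero.pos n))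
          (show ((i:ℕ)+1+m-n) % n = ((i:ℕ)+(m+1)-n) % n from by
            rw [show (i:ℕ)+1+m = (i:ℕ)+(m+1) from by omega])]
        by_cases hn2 : (i:ℕ)+(m+1) = n
        · rw [if_pos (show (i:ℕ)+1+m = n by omega), if_pos hn2]
          by_cases hi0 : (i:ℕ) = 0
          · rw [if_pos hi0, if_pos hi0]
            ring
          · rw [if_neg hi0, if_neg hi0]
            ring
        · rw [if_neg (show ¬((i:ℕ)+1+m = n) by omega), if_neg hn2]
          by_cases hi0 : (i:ℕ) = 0
          · rw [if_pos hi0, if_pos hi0]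
            ring
          · rw [if_neg hi0, if_neg hi0]
            ring
    · -- bottom row: i = n - 1
      rw [dif_neg hi1]
      have hiv : (i : ℕ) = n - 1 := by have := i.isLt; omega
      have hi0 : ¬ ((i:ℕ) = 0) := by omega
      rw [if_neg hi0, if_neg hi0]
      rw [dif_pos hm', dif_neg (show ¬((i:ℕ)+(m+1) < n) by omega)]
      rw [val_congr x _ (Nat.mod_lt _ (NeZero.pos n))
        (show ((i:ℕ)+(m+1)-n) % n = m % n from by rw [show (i:ℕ)+(m+1)-n = m from by omega]),
        val_congr x _ hm' (Nat.mod_eq_of_lt hm')]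
      by_cases hm0 : 0 < m
      · rw [if_pos (show True ∧ 0 < m from ⟨trivial, hm0⟩),
          if_neg (show ¬((i:ℕ)+(m+1) = n) by omega)]
        ring
      · have hme : m = 0 := by omega
        subst hme
        rw [if_neg (show ¬(True ∧ 0 < 0) from by simp),
          if_pos (show (i:ℕ)+(0+1) = n by omega), add_zero]
        ring

/-- The "coordinate seed": y₀ for coordinate 0, yᵢ+1 otherwise. -/
noncomputable def Yc (x : Fin n → ℝ) (i : Fin n) : ℝ := if i = 0 then x 0 else x i + 1

lemma gn_eq (hn : 2 ≤ n) (aL aR : ℝ) (x : Fin n → ℝ) :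
    (gmap n aL aR)^[n] x = fun i => stm aL aR (Yc x i) - (if i = 0 then 0 else 1) := by
  rw [orbF_eq hn aL aR x n le_rfl]
  funext i
  unfold orbF Yc
  rw [dif_neg (by omega : ¬ ((i : ℕ) + n < n))]
  rw [val_congr x (Nat.mod_lt _ (NeZero.pos n)) i.isLt
    (show ((i:ℕ) + n - n) % n = (i:ℕ) from by
      rw [Nat.add_sub_cancel]; exact Nat.mod_eq_of_lt i.isLt)]
  have heta : (⟨(i:ℕ), i.isLt⟩ : Fin n) = i := rfl
  rw [heta]
  by_cases hi : i = 0
  · subst hi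
    simp
  · have hiv : (i : ℕ) ≠ 0 := fun hc => hi (Fin.ext (by simpa using hc))
    rw [if_neg (show ¬ ((i:ℕ) + n = n) from by omega), if_neg hiv, if_neg hi, if_neg hi]

lemma gsn_eq (hn : 2 ≤ n) (aL aR : ℝ) (x : Fin n → ℝ) :
    ∀ s, (gmap n aL aR)^[s * n] x
      = fun i => (stm aL aR)^[s] (Yc x i) - (if i = 0 then 0 else 1) := by
  intro s
  induction s with
  | zero =>
    funext i
    unfold Yc
    by_cases hi : i = 0 <;> simp [hi]
  | succ s ih =>
    have : (s + 1) * n = n + s * n := by ring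
    rw [this, Function.iterate_add_apply, ih, gn_eq hn]
    funext i
    have hYc : Yc (fun i => (stm aL aR)^[s] (Yc x i) - (if i = 0 then 0 else 1)) i
        = (stm aL aR)^[s] (Yc x i) := by
      unfold Yc
      by_cases hi : i = 0
      · subst hi; simp
      · simp [hi]
    rw [hYc, Function.iterate_succ_apply']

lemma orbit_zero (hn : 2 ≤ n) (aL aR : ℝ) (x : Fin n → ℝ) (s m : ℕ) (hm : m < n) :
    (gmap n aL aR)^[s * n + m] x 0 = (stm aL aR)^[s] (Yc x ⟨m, hm⟩) := by
  rw [add_comm, Function.iterate_add_apply, gsn_eq hn aL aR x s,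
    orbF_eq hn aL aR _ m (le_of_lt hm)]
  unfold orbF
  simp only [Fin.val_zero, zero_add]
  rw [dif_pos hm]
  by_cases hm0 : 0 < m
  · rw [if_pos (show True ∧ 0 < m from ⟨trivial, hm0⟩)]
    have hne : (⟨m, hm⟩ : Fin n) ≠ 0 := by
      intro hc
      have : m = 0 := by simpa using congrArg Fin.val hc
      omega
    simp only [if_neg hne]
    ring
  · have hme : m = 0 := by omega
    subst hme
    rw [if_neg (show ¬ (True ∧ 0 < 0) from by simp)]
    have he : (⟨0, hm⟩ : Fin n) = (0 : Fin n) := by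
      apply Fin.ext; simp
    rw [he]
    simp

/-- Partial product of m companion matrices (weights b 0, ..., b (m-1)), for m ≤ n. -/
def Rmat (n : ℕ) (m : ℕ) (b : ℕ → ℝ) : Matrix (Fin n) (Fin n) ℝ :=
  fun i j => if (i : ℕ) + m < n then (if (j : ℕ) = (i : ℕ) + m then 1 else 0)
    else if (j : ℕ) + n = (i : ℕ) + m then b (j : ℕ) else 0

lemma Rmat_zero (b : ℕ → ℝ) : Rmat n 0 b = 1 := by
  funext i j
  unfold Rmat
  rw [if_pos (by simpa using i.isLt), Matrix.one_apply]
  by_cases h : i = j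
  · subst h; simp
  · rw [if_neg h, if_neg (show ¬ ((j : ℕ) = (i : ℕ) + 0) from
      fun hc => h (Fin.ext (by simpa using hc.symm)))]

lemma Rmat_n (b : ℕ → ℝ) : Rmat n n b = Matrix.diagonal (fun i : Fin n => b (i : ℕ)) := by
  funext i j
  unfold Rmat
  rw [if_neg (by omega : ¬ ((i : ℕ) + n < n))]
  rw [Matrix.diagonal]
  by_cases h : i = j
  · subst h; simp
  · have : ¬ ((j : ℕ) + n = (i : ℕ) + n) := by
      intro hc
      exact h (Fin.ext (by omega))
    rw [if_neg this]
    simp [Matrix.of_apply, h]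

lemma Rmat_step (b : ℕ → ℝ) (m : ℕ) (hm : m < n) :
    compMat n (b m) * Rmat n m b = Rmat n (m + 1) b := by
  funext i j
  rw [Matrix.mul_apply]
  by_cases h : (i : ℕ) + 1 < n
  · rw [Finset.sum_eq_single (⟨(i : ℕ) + 1, h⟩ : Fin n)]
    · have hc : compMat n (b m) i ⟨(i : ℕ) + 1, h⟩ = 1 := by
        simp [compMat]
      rw [hc, one_mul]
      show Rmat n m b ⟨(i : ℕ) + 1, h⟩ j = Rmat n (m + 1) b i j
      unfold Rmat
      simp only [Fin.val_mk]
      rw [show (i : ℕ) + 1 + m = (i : ℕ) + (m + 1) from by omega]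
    · intro c _ hc
      have h1 : ¬ ((i : ℕ) + 1 = (c : ℕ)) := by
        intro hcc; exact hc (Fin.ext hcc.symm)
      have h2 : ¬ ((i : ℕ) = n - 1) := by omega
      simp [compMat, h1, h2]
    · intro hmem; exact absurd (Finset.mem_univ _) hmem
  · -- i = n-1
    have hiv : (i : ℕ) = n - 1 := by have := i.isLt; omega
    rw [Finset.sum_eq_single (0 : Fin n)]
    · have hc : compMat n (b m) i 0 = b m := by
        have h1 : ¬ ((i : ℕ) + 1 = ((0 : Fin n) : ℕ)) := by simp
        simp [compMat, h1, hiv]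
      rw [hc]
      unfold Rmat
      simp only [Fin.val_zero, zero_add]
      rw [if_pos hm]
      rw [if_neg (by omega : ¬ ((i : ℕ) + (m + 1) < n))]
      by_cases hj : (j : ℕ) = m
      · rw [if_pos hj, if_pos (by omega : (j : ℕ) + n = (i : ℕ) + (m + 1))]
        rw [hj]; ring
      · rw [if_neg hj, if_neg (by omega : ¬ ((j : ℕ) + n = (i : ℕ) + (m + 1)))]
        ring
    · intro c _ hc
      have h1 : ¬ ((i : ℕ) + 1 = (c : ℕ)) := by
        have := c.isLt; omega
      have h2 : ¬ ((c : ℕ) = 0) := by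
        intro hcc; exact hc (Fin.ext (by simpa using hcc))
      simp [compMat, h1, h2]
    · intro hmem; exact absurd (Finset.mem_univ _) hmem

/-- The matrix of the derivative of gmap^[t]. -/
noncomputable def Pmat (n : ℕ) [NeZero n] (aL aR : ℝ) (y : Fin n → ℝ) :
    ℕ → Matrix (Fin n) (Fin n) ℝ
  | 0 => 1
  | t + 1 => compMat n (stmDeriv aL aR ((gmap n aL aR)^[t] y 0)) * Pmat n aL aR y t

lemma Pmat_block (aL aR : ℝ) (y : Fin n → ℝ) (s : ℕ) :
    ∀ m, m ≤ n → Pmat n aL aR y (s * n + m)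
      = Rmat n m (fun j => stmDeriv aL aR ((gmap n aL aR)^[s * n + j] y 0))
        * Pmat n aL aR y (s * n) := by
  intro m
  induction m with
  | zero =>
    intro _
    rw [Rmat_zero, one_mul]
    rfl
  | succ m ih =>
    intro hm
    have hm' : m < n := hm
    have hstep := Rmat_step (fun j => stmDeriv aL aR ((gmap n aL aR)^[s * n + j] y 0)) m hm'
    have hPs : Pmat n aL aR y (s * n + (m + 1))
        = compMat n (stmDeriv aL aR ((gmap n aL aR)^[s * n + m] y 0))
          * Pmat n aL aR y (s * n + m) := rfl
    rw [hPs, ih (le_of_lt hm'), ← mul_assoc, hstep]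

lemma Pmat_diag (aL aR : ℝ) (y : Fin n → ℝ) :
    ∀ s, Pmat n aL aR y (s * n)
      = Matrix.diagonal (fun i : Fin n =>
          ∏ t ∈ Finset.range s, stmDeriv aL aR ((gmap n aL aR)^[t * n + (i : ℕ)] y 0)) := by
  intro s
  induction s with
  | zero => simp [Pmat]
  | succ s ih =>
    have h1 : (s + 1) * n = s * n + n := by ring
    have hfun : (fun i : Fin n => stmDeriv aL aR ((gmap n aL aR)^[s * n + (i:ℕ)] y 0) *
        ∏ t ∈ Finset.range s, stmDeriv aL aR ((gmap n aL aR)^[t * n + (i:ℕ)] y 0))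
        = fun i : Fin n =>
            ∏ t ∈ Finset.range (s+1), stmDeriv aL aR ((gmap n aL aR)^[t * n + (i:ℕ)] y 0) := by
      funext i
      rw [Finset.prod_range_succ, mul_comm]
    rw [h1, Pmat_block aL aR y s n le_rfl, Rmat_n, ih, Matrix.diagonal_mul_diagonal, hfun]

lemma gmap_hasFDerivAt (hn : 2 ≤ n) (aL aR : ℝ) (z : Fin n → ℝ) (hz : z 0 ≠ 0) :
    HasFDerivAt (gmap n aL aR)
      (LinearMap.toContinuousLinearMap
        (Matrix.mulVecLin (compMat n (stmDeriv aL aR (z 0))))) z := by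
  rcases lt_or_gt_of_ne hz with hneg | hpos
  · have hd : stmDeriv aL aR (z 0) = aL := if_pos hneg
    rw [hd]
    have haff : HasFDerivAt (fun w : Fin n → ℝ => (compMat n aL).mulVec w + Pi.single 0 1)
        (LinearMap.toContinuousLinearMap (Matrix.mulVecLin (compMat n aL))) z := by
      have := (LinearMap.toContinuousLinearMap (Matrix.mulVecLin (compMat n aL)) :
        (Fin n → ℝ) →L[ℝ] (Fin n → ℝ)).hasFDerivAt (x := z)
      have heq : ⇑(LinearMap.toContinuousLinearMap (Matrix.mulVecLin (compMat n aL)))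
          = fun w : Fin n → ℝ => (compMat n aL).mulVec w := by
        funext w; simp [Matrix.mulVecLin]
      rw [heq] at this
      exact this.add_const _
    apply haff.congr_of_eventuallyEq
    have hopen : IsOpen {w : Fin n → ℝ | w 0 < 0} := isOpen_lt (continuous_apply 0) continuous_const
    filter_upwards [hopen.mem_nhds hneg] with w hw
    unfold gmap
    rw [if_pos (le_of_lt hw)]
  · have hd : stmDeriv aL aR (z 0) = aR := if_neg (not_lt.mpr (le_of_lt hpos))
    rw [hd]
    have haff : HasFDerivAt (fun w : Fin n → ℝ => (compMat n aR).mulVec w + Pi.single 0 1)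
        (LinearMap.toContinuousLinearMap (Matrix.mulVecLin (compMat n aR))) z := by
      have := (LinearMap.toContinuousLinearMap (Matrix.mulVecLin (compMat n aR)) :
        (Fin n → ℝ) →L[ℝ] (Fin n → ℝ)).hasFDerivAt (x := z)
      have heq : ⇑(LinearMap.toContinuousLinearMap (Matrix.mulVecLin (compMat n aR)))
          = fun w : Fin n → ℝ => (compMat n aR).mulVec w := by
        funext w; simp [Matrix.mulVecLin]
      rw [heq] at this
      exact this.add_const _
    apply haff.congr_of_eventuallyEq
    have hopen : IsOpen {w : Fin n → ℝ | 0 < w 0} := isOpen_lt continuous_const (continuous_apply 0)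
    filter_upwards [hopen.mem_nhds hpos] with w hw
    unfold gmap
    rw [if_neg (not_le.mpr hw)]

lemma iter_hasFDerivAt (hn : 2 ≤ n) (aL aR : ℝ) (y : Fin n → ℝ)
    (horb : ∀ j : ℕ, ((gmap n aL aR)^[j] y) 0 ≠ 0) (t : ℕ) :
    HasFDerivAt ((gmap n aL aR)^[t])
      (LinearMap.toContinuousLinearMap (Matrix.mulVecLin (Pmat n aL aR y t))) y := by
  induction t with
  | zero =>
    have h1 : LinearMap.toContinuousLinearMap (Matrix.mulVecLin (Pmat n aL aR y 0))
        = ContinuousLinearMap.id ℝ (Fin n → ℝ) := by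
      apply ContinuousLinearMap.ext
      intro v
      show Matrix.mulVecLin (1 : Matrix (Fin n) (Fin n) ℝ) v = v
      rw [Matrix.mulVecLin_one]; rfl
    rw [h1]
    simpa using hasFDerivAt_id (𝕜 := ℝ) y
  | succ t ih =>
    have hstep := gmap_hasFDerivAt hn aL aR ((gmap n aL aR)^[t] y) (horb t)
    have hcomp := hstep.comp y ih
    have h1 : LinearMap.toContinuousLinearMap (Matrix.mulVecLin (Pmat n aL aR y (t + 1)))
        = (LinearMap.toContinuousLinearMap
            (Matrix.mulVecLin (compMat n (stmDeriv aL aR ((gmap n aL aR)^[t] y 0))))).comp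
          (LinearMap.toContinuousLinearMap (Matrix.mulVecLin (Pmat n aL aR y t))) := by
      apply ContinuousLinearMap.ext
      intro v
      show Matrix.mulVecLin (Pmat n aL aR y (t + 1)) v = _
      simp only [ContinuousLinearMap.coe_comp', Function.comp_apply,
        LinearMap.coe_toContinuousLinearMap']
      show (compMat n (stmDeriv aL aR ((gmap n aL aR)^[t] y 0)) * Pmat n aL aR y t).mulVec v
        = (compMat n (stmDeriv aL aR ((gmap n aL aR)^[t] y 0))).mulVec
            ((Pmat n aL aR y t).mulVec v)
      rw [Matrix.mulVec_mulVec]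
    rw [h1, Function.iterate_succ']
    exact hcomp

end JacAux

/-- At a point whose orbit avoids the switching hyperplanes, the Jacobian of g^{kn}
is the diagonal matrix diag(∏_{i<k} h'(h^i(y₁)), ∏_{i<k} h'(h^i(y₂+1)), ...,
∏_{i<k} h'(h^i(yₙ+1))). -/
theorem jacobian_of_iterate (n : ℕ) [NeZero n] (hn : 2 ≤ n) (k : ℕ) (hk : 2 ≤ k)
    (aL aR : ℝ) (haL : 0 < aL) (haR : aR < 0)
    (hexp1 : 1 < aL ^ (k - 2) * aR ^ 2) (hexp2 : 1 < aL ^ (k - 1) * |aR|)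
    (y : Fin n → ℝ) (horb : ∀ j : ℕ, ((gmap n aL aR)^[j] y) 0 ≠ 0) :
    HasFDerivAt ((gmap n aL aR)^[k * n])
      (LinearMap.toContinuousLinearMap (Matrix.mulVecLin (Matrix.diagonal
        (fun j : Fin n => if j = 0 then
            ∏ i ∈ Finset.range k, stmDeriv aL aR ((stm aL aR)^[i] (y 0))
          else ∏ i ∈ Finset.range k, stmDeriv aL aR ((stm aL aR)^[i] (y j + 1))))))
      y := by
  have hmain := JacAux.iter_hasFDerivAt hn aL aR y horb (k * n)
  have hP : JacAux.Pmat n aL aR y (k * n)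
      = Matrix.diagonal (fun j : Fin n => if j = 0 then
            ∏ i ∈ Finset.range k, stmDeriv aL aR ((stm aL aR)^[i] (y 0))
          else ∏ i ∈ Finset.range k, stmDeriv aL aR ((stm aL aR)^[i] (y j + 1))) := by
    rw [JacAux.Pmat_diag]
    apply congrArg Matrix.diagonal
    funext j
    have hval : ∀ t ∈ Finset.range k,
        stmDeriv aL aR ((gmap n aL aR)^[t * n + (j : ℕ)] y 0)
          = stmDeriv aL aR ((stm aL aR)^[t] (JacAux.Yc y j)) := by
      intro t _
      rw [JacAux.orbit_zero hn aL aR y t (j : ℕ) j.isLt]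
    rw [Finset.prod_congr rfl hval]
    by_cases hj : j = 0
    · subst hj
      simp [JacAux.Yc]
    · simp [JacAux.Yc, hj]
  rw [← hP]
  exact hmain
end

section
/- Let ψ : (ZMod k)^n → (ZMod k)^n with ψ(v) = (v₂, ..., vₙ, v₁+1), and let j, q, r be nonnegative integers with jk = qn + r and 0 ≤ r < n. Then for all v, ψ^{jk}(v) = (v_{r+1}+q, v_{r+2}+q, ..., vₙ+q, v₁+q+1, v₂+q+1, ..., v_r+q+1). -/
lemma psi_iterate_general (k n : ℕ) (hn : 0 < n) :
    ∀ (t : ℕ) (v : Fin n → ZMod k) (m : Fin n),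
      (psi k n)^[t] v m =
        v ⟨((m : ℕ) + t) % n, Nat.mod_lt _ hn⟩ + ((((m : ℕ) + t) / n : ℕ) : ZMod k) := by
  intro t
  induction t with
  | zero =>
      intro v m
      simp [Nat.mod_eq_of_lt m.isLt, Nat.div_eq_of_lt m.isLt]
  | succ t ih =>
      intro v m
      rw [Function.iterate_succ_apply, ih]
      have hmod : ∀ a : ℕ, (a % n + 1) % n = (a + 1) % n := by
        intro a
        conv_rhs => rw [Nat.add_mod]
        rw [Nat.add_mod (a % n) 1, Nat.mod_mod_of_dvd _ dvd_rfl]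
      set a := (m : ℕ) + t with ha
      have hlt : a % n < n := Nat.mod_lt _ hn
      simp only [psi]
      by_cases h : a % n + 1 = n
      · have hdvd : n ∣ a + 1 := by
          have h1 := Nat.div_add_mod a n
          exact ⟨a / n + 1, by rw [mul_add, mul_one]; omega⟩
        have hdiv : (a + 1) / n = a / n + 1 := by
          rw [Nat.succ_div, if_pos hdvd]
        have : v ⟨(a % n + 1) % n, Nat.mod_lt _ hn⟩ =
            v ⟨((m : ℕ) + (t + 1)) % n, Nat.mod_lt _ hn⟩ := by
          congr 1
          ext
          simp [hmod a, ha, Nat.add_assoc]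
        rw [if_pos h, this]
        have : (m : ℕ) + (t + 1) = a + 1 := by omega
        rw [this, hdiv]
        push_cast
        ring
      · have hndvd : ¬ n ∣ a + 1 := by
          have h2 : (a + 1) % n = a % n + 1 := by
            rw [← hmod a, Nat.mod_eq_of_lt (by omega)]
          intro hd
          have h4 : (a + 1) % n = 0 := by
            obtain ⟨c, hc⟩ := hd
            rw [hc, Nat.mul_mod_right]
          omega
        have hdiv : (a + 1) / n = a / n := by
          rw [Nat.succ_div, if_neg hndvd, Nat.add_zero]
        have : v ⟨(a % n + 1) % n, Nat.mod_lt _ hn⟩ =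
            v ⟨((m : ℕ) + (t + 1)) % n, Nat.mod_lt _ hn⟩ := by
          congr 1
          ext
          simp [hmod a, ha, Nat.add_assoc]
        rw [if_neg h, this]
        have h2 : (m : ℕ) + (t + 1) = a + 1 := by omega
        rw [h2, hdiv]
        ring

/-- If jk = qn + r with 0 ≤ r < n, then
ψ^{jk}(v) = (v_{r+1}+q, ..., vₙ+q, v₁+q+1, ..., v_r+q+1). -/
theorem psi_iterate_jk (k n : ℕ) (hk : 0 < k) (hn : 0 < n)
    (j q r : ℕ) (hr : r < n) (hjk : j * k = q * n + r) :
    ∀ (v : Fin n → ZMod k) (m : Fin n),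
      (psi k n)^[j * k] v m =
        v ⟨((m : ℕ) + r) % n, Nat.mod_lt _ hn⟩ + (q : ZMod k) +
          (if n ≤ (m : ℕ) + r then 1 else 0) := by
  intro v m
  rw [psi_iterate_general k n hn]
  have hmeq : (m : ℕ) + j * k = ((m : ℕ) + r) + q * n := by omega
  have hmod : ((m : ℕ) + j * k) % n = ((m : ℕ) + r) % n := by
    rw [hmeq, Nat.add_mul_mod_self_right]
  have hdiv : ((m : ℕ) + j * k) / n = ((m : ℕ) + r) / n + q := by
    rw [hmeq, Nat.add_mul_div_right _ _ hn]
  have hsmall : ((m : ℕ) + r) / n = if n ≤ (m : ℕ) + r then 1 else 0 := by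
    have hm : (m : ℕ) < n := m.isLt
    by_cases h : n ≤ (m : ℕ) + r
    · rw [if_pos h]
      have : ((m : ℕ) + r) / n = ((m : ℕ) + r - n + n) / n := by congr 1; omega
      rw [this, Nat.add_div_right _ hn, Nat.div_eq_of_lt (by omega)]
    · rw [if_neg h, Nat.div_eq_of_lt (by omega)]
  have hv : v ⟨((m : ℕ) + j * k) % n, Nat.mod_lt _ hn⟩ =
      v ⟨((m : ℕ) + r) % n, Nat.mod_lt _ hn⟩ := by
    congr 1; ext; exact hmod
  rw [hv, hdiv, hsmall]
  by_cases h : n ≤ (m : ℕ) + r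
  · rw [if_pos h, if_pos h]; push_cast; ring
  · rw [if_neg h, if_neg h]; push_cast; ring
end

section
/- Let k ≥ 2 and a_L ∈ (0,1), a_R < 0 satisfy a_R = −(1 − a_L^{k−1})/((1 − a_L) a_L^{k−2}). Then the skew tent map h(z) = a_L z + 1 (z ≤ 0), a_R z + 1 (z ≥ 0) satisfies h^k(0) = 0. -/
/-- On the upper boundary curve of S_k, a_R = −(1 − a_L^{k−1})/((1 − a_L) a_L^{k−2}),
the skew tent map satisfies h^k(0) = 0. -/
theorem skew_tent_upper_boundary (k : ℕ) (hk : 2 ≤ k) (aL aR : ℝ)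
    (haL0 : 0 < aL) (haL1 : aL < 1) (haR : aR < 0)
    (heq : aR = -(1 - aL ^ (k - 1)) / ((1 - aL) * aL ^ (k - 2))) :
    (stm aL aR)^[k] 0 = 0 := by
  obtain ⟨n, rfl⟩ : ∃ n, k = n + 2 := ⟨k - 2, by omega⟩
  have hsub1 : n + 2 - 1 = n + 1 := rfl
  have hsub2 : n + 2 - 2 = n := rfl
  rw [hsub1, hsub2] at heq
  have hcL : (0:ℝ) < 1 - aL := by linarith
  have hpow : (0:ℝ) < aL ^ n := pow_pos haL0 n
  have hc : (0:ℝ) < (1 - aL) * aL ^ n := mul_pos hcL hpow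
  have hcne : (1 - aL) * aL ^ n ≠ 0 := ne_of_gt hc
  have key : ∀ j, j ≤ n →
      (stm aL aR)^[j + 2] 0 = (aL ^ n - aL ^ j) / ((1 - aL) * aL ^ n) := by
    intro j
    induction j with
    | zero =>
      intro _
      have h1 : stm aL aR 0 = 1 := by simp [stm]
      have h2 : stm aL aR 1 = aR + 1 := by
        unfold stm; norm_num
      show stm aL aR (stm aL aR 0) = _
      rw [h1, h2, heq]
      rw [pow_succ]
      field_simp
      ring
    | succ j ih =>
      intro hjn
      have hj : j ≤ n := by omega
      have hform := ih hj
      have hle : aL ^ n ≤ aL ^ j :=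
        pow_le_pow_of_le_one (le_of_lt haL0) (le_of_lt haL1) hj
      have hx : (aL ^ n - aL ^ j) / ((1 - aL) * aL ^ n) ≤ 0 :=
        div_nonpos_of_nonpos_of_nonneg (by linarith) (le_of_lt hc)
      rw [show j + 1 + 2 = (j + 2) + 1 from rfl, Function.iterate_succ_apply',
        hform]
      unfold stm
      rw [if_pos hx]
      rw [pow_succ]
      field_simp
      ring
  have := key n le_rfl
  rw [this]
  simp
end
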